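/- arXiv:1201.3814 — 6 statements merged into one kernel-verified Lean document; each statement's English description precedes it below -/
import Mathlib

section
/- Let A be an uncountable abelian group and let ℵ be a cardinal with ℵ₀ ≤ ℵ < |A|. Then A contains a subgroup B such that the index (A : B) equals ℵ. -/
universe u

open Cardinal

namespace IndexProofAux


variable {A : Type u} [AddCommGroup A]

lemma mk_le_mul_of_fibers {α β : Type u} (f : α → β) {c : Cardinal.{u}}
    (h : ∀ b : β, #{a : α // f a = b} ≤ c) : #α ≤ #β * c := by
  calc #α = #(Σ b : β, {a : α // f a = b}) := mk_congr (Equiv.sigmaFiberEquiv f).symm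
    _ = Cardinal.sum (fun b : β => #{a : α // f a = b}) := mk_sigma _
    _ ≤ Cardinal.sum (fun _ : β => c) := Cardinal.sum_le_sum _ _ h
    _ = #β * c := Cardinal.sum_const' β c

lemma mk_closure_le (S : Set A) : #(AddSubgroup.closure S) ≤ max #S ℵ₀ := by
  classical
  rcases S.eq_empty_or_nonempty with rfl | hne
  · rw [AddSubgroup.closure_empty]
    have : Subsingleton (⊥ : AddSubgroup A) := by infer_instance
    exact le_trans (Cardinal.le_one_iff_subsingleton.2 this)
      (le_max_of_le_right Cardinal.one_le_aleph0)
  · have : Nonempty S := hne.to_subtype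
    let f : FreeAbelianGroup S →+ A := FreeAbelianGroup.lift Subtype.val
    have hS : S ⊆ (f.range : Set A) := by
      intro s hs
      exact ⟨FreeAbelianGroup.of ⟨s, hs⟩, FreeAbelianGroup.lift_apply_of _ _⟩
    have h1 : AddSubgroup.closure S ≤ f.range := (AddSubgroup.closure_le _).2 hS
    calc #(AddSubgroup.closure S) ≤ #(f.range) :=
          Cardinal.mk_le_mk_of_subset h1
      _ ≤ #(FreeAbelianGroup S) := Cardinal.mk_le_of_surjective f.rangeRestrict_surjective
      _ = max #S ℵ₀ := Cardinal.mk_freeAbelianGroup S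

/-- existence of a subgroup of any infinite cardinality at most `#A` -/
lemma exists_subgroup_mk_eq {ℵ : Cardinal.{u}} (h₁ : ℵ₀ ≤ ℵ) {S : Set A} (hS : #S = ℵ) :
    #(AddSubgroup.closure S) = ℵ := by
  refine le_antisymm ?_ ?_
  · calc #(AddSubgroup.closure S) ≤ max #S ℵ₀ := mk_closure_le S
      _ = ℵ := by rw [hS, max_eq_left h₁]
  · rw [← hS]
    exact Cardinal.mk_le_mk_of_subset AddSubgroup.subset_closure

/-- Zorn: a maximal subgroup avoiding `V`, and its essentiality property. -/
lemma exists_maximal_disjoint (V : AddSubgroup A) :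
    ∃ C : AddSubgroup A, C ⊓ V = ⊥ ∧
      ∀ x : A, x ∉ C → ∃ (c : A) (k : ℤ), c ∈ C ∧ c + k • x ∈ V ∧ c + k • x ≠ 0 := by
  obtain ⟨C, -, hmax⟩ := zorn_le_nonempty₀ {C : AddSubgroup A | C ⊓ V = ⊥}
    (fun c hcs hc y hy => by
      refine ⟨sSup c, ?_, fun z hz => le_sSup hz⟩
      rw [Set.mem_setOf_eq, AddSubgroup.eq_bot_iff_forall]
      intro x hx
      obtain ⟨hx1, hx2⟩ := AddSubgroup.mem_inf.1 hx
      obtain ⟨D, hDc, hxD⟩ := (AddSubgroup.mem_sSup_of_directedOn ⟨y, hy⟩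
        (IsChain.directedOn hc)).1 hx1
      have : x ∈ D ⊓ V := AddSubgroup.mem_inf.2 ⟨hxD, hx2⟩
      rw [hcs hDc] at this
      exact this) ⊥ (by simp)
  refine ⟨C, hmax.1, fun x hx => ?_⟩
  have hne : (C ⊔ AddSubgroup.closure {x}) ⊓ V ≠ ⊥ := by
    intro hbot
    have hle : C ≤ C ⊔ AddSubgroup.closure {x} := le_sup_left
    have := hmax.2 hbot hle
    exact hx (this (le_sup_right (a := C) (AddSubgroup.subset_closure rfl)))
  obtain ⟨v, hv, hvne⟩ : ∃ v, v ∈ (C ⊔ AddSubgroup.closure {x}) ⊓ V ∧ v ≠ 0 := by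
    by_contra hcon
    push_neg at hcon
    exact hne (AddSubgroup.eq_bot_iff_forall _ |>.2 hcon)
  obtain ⟨hv1, hv2⟩ := AddSubgroup.mem_inf.1 hv
  obtain ⟨c, hc, z, hz, hcz⟩ := AddSubgroup.mem_sup.1 hv1
  obtain ⟨k, hk⟩ := AddSubgroup.mem_closure_singleton.1 hz
  refine ⟨c, k, hc, ?_, ?_⟩
  · rw [hk, hcz]; exact hv2
  · rw [hk, hcz]; exact hvne

lemma socle_case (p : ℕ) (hp : p.Prime) (ℵ : Cardinal.{u}) (h₁ : ℵ₀ ≤ ℵ)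
    (hsoc : ℵ ≤ #{x : A // p • x = 0}) :
    ∃ B : AddSubgroup A, #(A ⧸ B) = ℵ := by
  classical
  -- the socle as a subgroup
  let Sp : AddSubgroup A :=
    { carrier := {x : A | p • x = 0}
      zero_mem' := smul_zero p
      add_mem' := fun {a b} ha hb => by
        simp only [Set.mem_setOf_eq] at *
        rw [smul_add, ha, hb, add_zero]
      neg_mem' := fun {a} ha => by
        simp only [Set.mem_setOf_eq] at *
        rw [smul_neg, ha, neg_zero] }
  -- a subset of the socle of size ℵ
  obtain ⟨s, hs⟩ := Cardinal.le_mk_iff_exists_set.1 hsoc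
  let S : Set A := Subtype.val '' s
  have hSsoc : S ⊆ {x : A | p • x = 0} := by
    rintro x ⟨y, -, rfl⟩; exact y.2
  have hSmk : #S = ℵ := by
    rw [Cardinal.mk_image_eq Subtype.val_injective, hs]
  -- the subgroup V
  set V : AddSubgroup A := AddSubgroup.closure S with hV
  have hVmk : #V = ℵ := exists_subgroup_mk_eq h₁ hSmk
  have hVsoc : ∀ v ∈ V, p • v = 0 := fun v hv =>
    (AddSubgroup.closure_le Sp |>.2 hSsoc) hv
  obtain ⟨C, hC, hCe⟩ := exists_maximal_disjoint V
  refine ⟨C, ?_⟩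
  set G := A ⧸ C with hG
  let π : A →+ G := QuotientAddGroup.mk' C
  have hπker : ∀ a : A, π a = 0 ↔ a ∈ C := fun a => QuotientAddGroup.eq_zero_iff a
  have hinjV : ∀ v ∈ V, π v = 0 → v = 0 := by
    intro v hv hv0
    have : v ∈ C ⊓ V := AddSubgroup.mem_inf.2 ⟨(hπker v).1 hv0, hv⟩
    rw [hC] at this; exact this
  -- lower bound
  have hlow : ℵ ≤ #G := by
    rw [← hVmk]
    refine Cardinal.mk_le_of_injective (f := fun v : V => π v) ?_
    intro v w hvw
    have hvw' : π (v : A) = π (w : A) := hvw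
    have : π ((v : A) - w) = 0 := by rw [map_sub, hvw', sub_self]
    have := hinjV (v - w) (sub_mem v.2 w.2) this
    exact Subtype.ext (sub_eq_zero.1 this)
  -- the image of V in G
  let Vb : Set G := π '' (V : Set A)
  have hVbmk : #Vb ≤ ℵ := le_trans (Cardinal.mk_image_le) (le_of_eq hVmk)
  -- key essentiality fact in G
  have key : ∀ x : G, x ≠ 0 → ∃ (k : ℤ) (v : A), v ∈ V ∧ π v ≠ 0 ∧ k • x = π v := by
    intro x hx
    obtain ⟨a, rfl⟩ := QuotientAddGroup.mk'_surjective C x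
    have ha : a ∉ C := fun h => hx ((hπker a).2 h)
    obtain ⟨c, k, hc, hcv, hcne⟩ := hCe a ha
    refine ⟨k, c + k • a, hcv, ?_, ?_⟩
    · intro h0
      exact hcne (hinjV _ hcv h0)
    · have : π c = 0 := (hπker c).2 hc
      rw [map_add, this, zero_add, map_zsmul]
  -- p • (π v) = 0 for v ∈ V
  have hπV : ∀ v ∈ V, p • π v = 0 := by
    intro v hv
    rw [← map_nsmul, hVsoc v hv, map_zero]
  -- no q-torsion for q ≠ p
  have hq : ∀ q : ℕ, q.Prime → q ≠ p → ∀ x : G, q • x = 0 → x = 0 := by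
    intro q hq hqp x hqx
    by_contra hx
    obtain ⟨k, v, hv, hπvne, hk⟩ := key x hx
    set w := π v with hw
    have hqw : (q : ℤ) • w = 0 := by
      rw [← hk, smul_comm]
      rw [natCast_zsmul, hqx, smul_zero]
    have hpw : (p : ℤ) • w = 0 := by rw [natCast_zsmul]; exact hπV v hv
    -- coprime: Bezout
    have hco : Nat.Coprime p q := (Nat.coprime_primes hp hq).2 (Ne.symm hqp)
    obtain ⟨a, b, hab⟩ : ∃ a b : ℤ, a * p + b * q = 1 := by
      refine ⟨Nat.gcdA p q, Nat.gcdB p q, ?_⟩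
      have := Nat.gcd_eq_gcd_ab p q
      rw [hco] at this
      push_cast at this
      linear_combination -this
    have : w = 0 := by
      calc w = (1 : ℤ) • w := (one_smul ℤ w).symm
        _ = (a * p + b * q) • w := by rw [hab]
        _ = a • ((p : ℤ) • w) + b • ((q : ℤ) • w) := by
            rw [add_smul, mul_smul, mul_smul]
        _ = 0 := by rw [hpw, hqw, smul_zero, smul_zero, add_zero]
    exact hπvne (hw ▸ this)
  -- p-torsion is inside Vb
  have hpt : ∀ x : G, p • x = 0 → x ∈ Vb ∪ {0} := by
    intro x hpx
    by_cases hx : x = 0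
    · exact Or.inr (by simp [hx])
    obtain ⟨k, v, hv, hπvne, hk⟩ := key x hx
    have hpk : ¬ ((p : ℤ) ∣ k) := by
      rintro ⟨j, rfl⟩
      apply hπvne
      rw [← hk, mul_comm, mul_smul, natCast_zsmul, hpx, smul_zero]
    have hgcd : Int.gcd k p = 1 := by
      have hdvd : Int.gcd k (p : ℤ) ∣ p := by
        have h2 : (Int.gcd k (p : ℤ) : ℤ) ∣ (p : ℤ) := Int.gcd_dvd_right _ _
        exact_mod_cast h2
      rcases hp.eq_one_or_self_of_dvd _ hdvd with h | h
      · exact h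
      · exfalso
        apply hpk
        have h3 : (Int.gcd k (p : ℤ) : ℤ) ∣ k := Int.gcd_dvd_left _ _
        rwa [h] at h3
    obtain ⟨a, b, hab⟩ : ∃ a b : ℤ, k * a + p * b = 1 := by
      refine ⟨Int.gcdA k p, Int.gcdB k p, ?_⟩
      have := Int.gcd_eq_gcd_ab k (p : ℤ)
      rw [hgcd] at this
      simpa using this.symm
    have : x = π (a • v) := by
      calc x = (1 : ℤ) • x := (one_smul ℤ x).symm
        _ = (k * a + p * b) • x := by rw [hab]
        _ = a • (k • x) + b • ((p : ℤ) • x) := by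
            rw [add_smul, mul_comm k a, mul_smul, mul_comm (p : ℤ) b, mul_smul]
        _ = a • (k • x) := by rw [natCast_zsmul, hpx, smul_zero, add_zero]
        _ = π (a • v) := by rw [hk, map_zsmul]
    exact Or.inl ⟨a • v, zsmul_mem hv a, this.symm⟩
  -- p-power torsion layers
  let Gn : ℕ → Set G := fun n => {x : G | p ^ n • x = 0}
  have hVb0 : #(Vb ∪ {(0:G)} : Set G) ≤ ℵ := by
    calc #(Vb ∪ {(0:G)} : Set G) ≤ #Vb + #({(0:G)} : Set G) := Cardinal.mk_union_le _ _
      _ ≤ ℵ + 1 := by rw [Cardinal.mk_singleton]; exact add_le_add hVbmk le_rfl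
      _ ≤ ℵ + ℵ := add_le_add le_rfl (le_trans Cardinal.one_le_aleph0 h₁)
      _ = ℵ := Cardinal.add_eq_self h₁
  have hGn : ∀ n : ℕ, #(Gn n) ≤ ℵ := by
    intro n
    induction n with
    | zero =>
      have hss : Subsingleton (Gn 0) := by
        constructor
        rintro ⟨a, ha⟩ ⟨b, hb⟩
        simp only [Gn, Set.mem_setOf_eq, pow_zero, one_smul] at ha hb
        exact Subtype.ext (ha.trans hb.symm)
      exact le_trans (Cardinal.le_one_iff_subsingleton.2 hss)
        (le_trans Cardinal.one_le_aleph0 h₁)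
    | succ n ih =>
      let f : Gn (n+1) → Gn n := fun x => ⟨p • (x : G), by
        have hx := x.2
        simp only [Gn, Set.mem_setOf_eq] at hx ⊢
        rw [← mul_smul, ← pow_succ, hx]⟩
      have hfib : ∀ b : Gn n, #{a : Gn (n+1) // f a = b} ≤ ℵ := by
        intro b
        by_cases hne : Nonempty {a : Gn (n+1) // f a = b}
        · obtain ⟨a₀⟩ := hne
          refine le_trans (Cardinal.mk_le_of_injective
            (f := fun a : {a : Gn (n+1) // f a = b} =>
              (⟨(a.1 : G) - (a₀.1 : G), ?_⟩ : (Vb ∪ {(0:G)} : Set G))) ?_) hVb0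
          · apply hpt
            have h1 : p • (a.1 : G) = b := congrArg Subtype.val a.2
            have h2 : p • (a₀.1 : G) = b := congrArg Subtype.val a₀.2
            rw [smul_sub, h1, h2, sub_self]
          · intro a a' haa
            have : (a.1 : G) - (a₀.1 : G) = (a'.1 : G) - (a₀.1 : G) :=
              congrArg Subtype.val haa
            exact Subtype.ext (Subtype.ext (by
              have := sub_left_injective.eq_iff.1 this
              exact this))
        · rw [not_nonempty_iff] at hne
          rw [Cardinal.mk_eq_zero]
          exact zero_le
      calc #(Gn (n+1)) ≤ #(Gn n) * ℵ := mk_le_mul_of_fibers f hfib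
        _ ≤ ℵ * ℵ := mul_le_mul_left ih ℵ
        _ = ℵ := Cardinal.mul_eq_self h₁
  have htor : ∀ m : ℕ, 0 < m → ∀ x : G, m • x = 0 → ∃ n, p ^ n • x = 0 := by
    intro m
    induction m using Nat.strong_induction_on with
    | _ m ih =>
      intro hm x hx
      rcases eq_or_lt_of_le (Nat.one_le_iff_ne_zero.2 hm.ne') with h1 | h1
      · subst h1
        exact ⟨0, by rw [pow_zero, one_smul]; simpa using hx⟩
      · set q := m.minFac with hq'
        have hqprime : q.Prime := Nat.minFac_prime (by omega)
        have hqdvd : q ∣ m := m.minFac_dvd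
        by_cases hqp : q = p
        · have hdvd : p ∣ m := hqp ▸ hqdvd
          have hstep : (m / p) • (p • x) = 0 := by
            rw [← mul_smul, Nat.div_mul_cancel hdvd, hx]
          obtain ⟨n, hn⟩ := ih (m / p) (Nat.div_lt_self hm hp.one_lt)
            (Nat.div_pos (Nat.le_of_dvd hm hdvd) hp.pos) (p • x) hstep
          exact ⟨n + 1, by rw [pow_succ, mul_smul]; exact hn⟩
        · have hy : q • ((m / q) • x) = 0 := by
            rw [← mul_smul, Nat.mul_div_cancel' hqdvd, hx]
          have hy0 : (m / q) • x = 0 := hq q hqprime hqp _ hy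
          exact ih (m / q) (Nat.div_lt_self hm hqprime.one_lt)
            (Nat.div_pos (Nat.le_of_dvd hm hqdvd) hqprime.pos) x hy0
  have hcover : ∀ x : G, ∃ n : ℕ, x ∈ Gn n := by
    intro x
    by_cases hx : x = 0
    · exact ⟨0, by simp only [Gn, Set.mem_setOf_eq, hx, smul_zero]⟩
    obtain ⟨k, v, hv, hπvne, hk⟩ := key x hx
    have hkne : k ≠ 0 := by
      rintro rfl
      rw [zero_smul] at hk
      exact hπvne hk.symm
    have hzk : ((p : ℤ) * k) • x = 0 := by
      rw [mul_smul, hk, natCast_zsmul]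
      exact hπV v hv
    have hm : ((p : ℤ) * k).natAbs • x = 0 := by
      rcases Int.natAbs_eq ((p : ℤ) * k) with h | h
      · rw [← natCast_zsmul, ← h, hzk]
      · rw [← natCast_zsmul, ← neg_neg ((((p : ℤ) * k).natAbs : ℤ)), ← h, neg_smul, hzk,
          neg_zero]
    have hmpos : 0 < ((p : ℤ) * k).natAbs :=
      Int.natAbs_pos.2 (mul_ne_zero (by exact_mod_cast hp.ne_zero) hkne)
    exact htor _ hmpos x hm
  have hup : #G ≤ ℵ := by
    let Gn' : ULift.{u} ℕ → Set G := fun n => Gn n.down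
    have hsub : (Set.univ : Set G) ⊆ ⋃ n : ULift.{u} ℕ, Gn' n := by
      intro x _
      obtain ⟨n, hn⟩ := hcover x
      exact Set.mem_iUnion.2 ⟨⟨n⟩, hn⟩
    calc #G = #(Set.univ : Set G) := Cardinal.mk_univ.symm
      _ ≤ #(⋃ n : ULift.{u} ℕ, Gn' n) := Cardinal.mk_le_mk_of_subset hsub
      _ ≤ #(ULift.{u} ℕ) * ⨆ n : ULift.{u} ℕ, #(Gn' n) := Cardinal.mk_iUnion_le _
      _ ≤ ℵ₀ * ℵ := by
          refine mul_le_mul' (le_of_eq (Cardinal.mk_denumerable _)) ?_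
          exact ciSup_le' fun n => hGn n.down
      _ = ℵ := Cardinal.aleph0_mul_eq h₁
  exact le_antisymm hup hlow

lemma torsionfree_case (ℵ : Cardinal.{u}) (h₁ : ℵ₀ ≤ ℵ) (hle : ℵ ≤ #A)
    (hTF : ∀ (x : A) (k : ℤ), k ≠ 0 → k • x = 0 → x = 0) :
    ∃ B : AddSubgroup A, #(A ⧸ B) = ℵ := by
  classical
  obtain ⟨S, hSmk⟩ := Cardinal.le_mk_iff_exists_set.1 hle
  set V : AddSubgroup A := AddSubgroup.closure S with hV
  have hVmk : #V = ℵ := exists_subgroup_mk_eq h₁ hSmk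
  obtain ⟨C, hC, hCe⟩ := exists_maximal_disjoint V
  refine ⟨C, ?_⟩
  set G := A ⧸ C with hG
  let π : A →+ G := QuotientAddGroup.mk' C
  have hπker : ∀ a : A, π a = 0 ↔ a ∈ C := fun a => QuotientAddGroup.eq_zero_iff a
  have hinjV : ∀ v ∈ V, π v = 0 → v = 0 := by
    intro v hv hv0
    have hmem : v ∈ C ⊓ V := AddSubgroup.mem_inf.2 ⟨(hπker v).1 hv0, hv⟩
    rw [hC] at hmem
    exact hmem
  have hlow : ℵ ≤ #G := by
    rw [← hVmk]
    refine Cardinal.mk_le_of_injective (f := fun v : V => π v) ?_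
    intro v w hvw
    have hvw' : π (v : A) = π (w : A) := hvw
    have : π ((v : A) - w) = 0 := by rw [map_sub, hvw', sub_self]
    have := hinjV (v - w) (sub_mem v.2 w.2) this
    exact Subtype.ext (sub_eq_zero.1 this)
  let Vb : Set G := π '' (V : Set A)
  have hVbmk : #Vb ≤ ℵ := le_trans (Cardinal.mk_image_le) (le_of_eq hVmk)
  have key : ∀ x : G, x ≠ 0 → ∃ (k : ℤ) (v : A), v ∈ V ∧ π v ≠ 0 ∧ k • x = π v := by
    intro x hx
    obtain ⟨a, rfl⟩ := QuotientAddGroup.mk'_surjective C x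
    have ha : a ∉ C := fun h => hx ((hπker a).2 h)
    obtain ⟨c, k, hc, hcv, hcne⟩ := hCe a ha
    refine ⟨k, c + k • a, hcv, ?_, ?_⟩
    · intro h0
      exact hcne (hinjV _ hcv h0)
    · have hc0 : π c = 0 := (hπker c).2 hc
      rw [map_add, hc0, zero_add, map_zsmul]
  have hGTF : ∀ (x : G) (j : ℤ), j ≠ 0 → j • x = 0 → x = 0 := by
    intro x j hj hjx
    by_contra hx
    obtain ⟨k, v, hv, hπvne, hk⟩ := key x hx
    have hπjv : π (j • v) = 0 := by
      rw [map_zsmul, ← hk, smul_comm, hjx, smul_zero]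
    have hmem : j • v ∈ C ⊓ V := AddSubgroup.mem_inf.2 ⟨(hπker _).1 hπjv, zsmul_mem hv j⟩
    rw [hC, AddSubgroup.mem_bot] at hmem
    exact hπvne (by rw [hTF v j hj hmem, map_zero])
  have keyne : ∀ x : {x : G // x ≠ 0},
      ∃ (k : ℤ) (v : A), v ∈ V ∧ π v ≠ 0 ∧ k • (x : G) = π v :=
    fun x => key x.1 x.2
  choose kk vv hvv hvvne hkk using keyne
  have hkkne : ∀ x, kk x ≠ 0 := by
    intro x h0
    apply hvvne x
    rw [← hkk x, h0, zero_smul]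
  have hinj2 : Function.Injective (fun x : {x : G // x ≠ 0} =>
      ((⟨kk x⟩, ⟨kk x • (x : G), ⟨vv x, hvv x, (hkk x).symm⟩⟩) : ULift.{u} ℤ × Vb)) := by
    intro x y hxy
    have h1 : kk x = kk y := congrArg ULift.down (congrArg Prod.fst hxy)
    have h2 : kk x • (x : G) = kk y • (y : G) :=
      congrArg Subtype.val (congrArg Prod.snd hxy)
    have h3 : kk x • ((x : G) - (y : G)) = 0 := by
      rw [smul_sub, h2, h1, sub_self]
    exact Subtype.ext (sub_eq_zero.1 (hGTF _ _ (hkkne x) h3))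
  have hup : #G ≤ ℵ := by
    have hcompl : #(({(0:G)}ᶜ : Set G)) ≤ ℵ₀ * ℵ := by
      have e : #(({(0:G)}ᶜ : Set G)) = #{x : G // x ≠ 0} :=
        Cardinal.mk_congr (Equiv.subtypeEquivRight (fun x => by simp))
      rw [e]
      refine le_trans (Cardinal.mk_le_of_injective hinj2) ?_
      rw [Cardinal.mk_prod, Cardinal.lift_id, Cardinal.lift_id]
      exact mul_le_mul' (le_of_eq (Cardinal.mk_denumerable _)) hVbmk
    calc #G = #({(0:G)} : Set G) + #(({(0:G)}ᶜ : Set G)) := (Cardinal.mk_sum_compl _).symm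
      _ ≤ 1 + ℵ₀ * ℵ := add_le_add (le_of_eq (Cardinal.mk_singleton _)) hcompl
      _ ≤ ℵ + ℵ := add_le_add (le_trans Cardinal.one_le_aleph0 h₁)
          (le_of_eq (Cardinal.aleph0_mul_eq h₁))
      _ = ℵ := Cardinal.add_eq_self h₁
  exact le_antisymm hup hlow

lemma bounded_torsion_lt {ℵ : Cardinal.{u}} (h₁ : ℵ₀ ≤ ℵ)
    (hsoc : ∀ p : ℕ, p.Prime → #{x : A // p • x = 0} < ℵ) :
    ∀ n : ℕ, 0 < n → #{x : A // n • x = 0} < ℵ := by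
  intro n
  induction n using Nat.strong_induction_on with
  | _ n ih =>
    intro hn
    rcases eq_or_lt_of_le (Nat.one_le_iff_ne_zero.2 hn.ne') with h1 | h1
    · subst h1
      have hss : Subsingleton {x : A // 1 • x = 0} := by
        constructor
        rintro ⟨a, ha⟩ ⟨b, hb⟩
        rw [one_smul] at ha hb
        exact Subtype.ext (ha.trans hb.symm)
      exact lt_of_le_of_lt (Cardinal.le_one_iff_subsingleton.2 hss)
        (lt_of_lt_of_le Cardinal.one_lt_aleph0 h₁)
    · set p := n.minFac with hp'
      have hpp : p.Prime := Nat.minFac_prime (by omega)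
      have hdvd : p ∣ n := n.minFac_dvd
      set m := n / p with hm'
      let f : {x : A // n • x = 0} → {x : A // m • x = 0} := fun x =>
        ⟨p • x.1, by rw [← mul_smul, Nat.div_mul_cancel hdvd]; exact x.2⟩
      have hfib : ∀ b, #{a // f a = b} ≤ #{x : A // p • x = 0} := by
        intro b
        by_cases hne : Nonempty {a // f a = b}
        · obtain ⟨a₀⟩ := hne
          refine Cardinal.mk_le_of_injective (f := fun a : {a // f a = b} =>
            (⟨a.1.1 - a₀.1.1, ?_⟩ : {x : A // p • x = 0})) ?_
          · have e1 : p • a.1.1 = b.1 := congrArg Subtype.val a.2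
            have e2 : p • a₀.1.1 = b.1 := congrArg Subtype.val a₀.2
            rw [smul_sub, e1, e2, sub_self]
          · intro a a' h
            have := congrArg Subtype.val h
            exact Subtype.ext (Subtype.ext (sub_left_injective this))
        · rw [not_nonempty_iff] at hne
          rw [Cardinal.mk_eq_zero]
          exact zero_le
      calc #{x : A // n • x = 0}
          ≤ #{x : A // m • x = 0} * #{x : A // p • x = 0} := mk_le_mul_of_fibers f hfib
        _ < ℵ := Cardinal.mul_lt_of_lt h₁
            (ih m (Nat.div_lt_self hn hpp.one_lt)
              (Nat.div_pos (Nat.le_of_dvd hn hdvd) hpp.pos))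
            (hsoc p hpp)

end IndexProofAux

/-- Let `A` be an uncountable abelian group and `ℵ` a cardinal with `ℵ₀ ≤ ℵ < |A|`.
Then `A` contains a subgroup `B` such that the index `(A : B)`, i.e. the cardinality
of `A ⧸ B`, equals `ℵ`. -/
theorem uncountable_abelian_has_subgroup_of_index (A : Type u) [AddCommGroup A]
    (hA : Cardinal.aleph0 < Cardinal.mk A)
    (ℵ : Cardinal.{u}) (h₁ : Cardinal.aleph0 ≤ ℵ) (h₂ : ℵ < Cardinal.mk A) :
    ∃ B : AddSubgroup A, Cardinal.mk (A ⧸ B) = ℵ := by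
  classical
  by_cases hcase : ∃ p : ℕ, p.Prime ∧ ℵ ≤ #{x : A // p • x = 0}
  · obtain ⟨p, hp, hsoc⟩ := hcase
    exact IndexProofAux.socle_case p hp ℵ h₁ hsoc
  · push_neg at hcase
    let T : AddSubgroup A :=
      { carrier := {x : A | ∃ n : ℕ, 0 < n ∧ n • x = 0}
        zero_mem' := ⟨1, one_pos, smul_zero 1⟩
        add_mem' := by
          rintro a b ⟨n, hn, ha⟩ ⟨m, hm, hb⟩
          refine ⟨n * m, Nat.mul_pos hn hm, ?_⟩
          have h1 : (n * m) • a = 0 := by rw [mul_comm, mul_smul, ha, smul_zero]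
          have h2 : (n * m) • b = 0 := by rw [mul_smul, hb, smul_zero]
          rw [smul_add, h1, h2, add_zero]
        neg_mem' := by
          rintro a ⟨n, hn, ha⟩
          exact ⟨n, hn, by rw [smul_neg, ha, neg_zero]⟩ }
    have hTlt : ∀ n : ℕ, 0 < n → #{x : A // n • x = 0} < ℵ :=
      IndexProofAux.bounded_torsion_lt h₁ hcase
    have hT : #T ≤ ℵ := by
      have hsub : (T : Set A) ⊆ ⋃ n : ULift.{u} ℕ, {x : A | (n.down + 1) • x = 0} := by
        rintro x ⟨n, hn, hx⟩
        refine Set.mem_iUnion.2 ⟨⟨n - 1⟩, ?_⟩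
        simp only [Set.mem_setOf_eq]
        rw [Nat.sub_add_cancel hn]
        exact hx
      calc #T ≤ #(⋃ n : ULift.{u} ℕ, {x : A | (n.down + 1) • x = 0}) :=
            Cardinal.mk_le_mk_of_subset hsub
        _ ≤ #(ULift.{u} ℕ) * ⨆ n : ULift.{u} ℕ, #{x : A | (n.down + 1) • x = 0} :=
            Cardinal.mk_iUnion_le _
        _ ≤ ℵ₀ * ℵ := mul_le_mul' (le_of_eq (Cardinal.mk_denumerable _))
            (ciSup_le' fun n => (hTlt (n.down + 1) (Nat.succ_pos _)).le)
        _ = ℵ := Cardinal.aleph0_mul_eq h₁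
    have hQTF : ∀ (x : A ⧸ T) (k : ℤ), k ≠ 0 → k • x = 0 → x = 0 := by
      intro x k hk hkx
      obtain ⟨a, rfl⟩ := QuotientAddGroup.mk'_surjective T x
      have h0 : (QuotientAddGroup.mk' T) (k • a) = 0 := by
        rw [map_zsmul]; exact hkx
      obtain ⟨n, hn, hna⟩ := (QuotientAddGroup.eq_zero_iff _).1 h0
      have hj : ((n : ℤ) * k) • a = 0 := by
        rw [mul_smul, natCast_zsmul]; exact hna
      have hjne : ((n : ℤ) * k) ≠ 0 :=
        mul_ne_zero (Int.natCast_ne_zero.2 (Nat.pos_iff_ne_zero.1 hn)) hk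
      have haT : a ∈ T := by
        refine ⟨((n : ℤ) * k).natAbs, Int.natAbs_pos.2 hjne, ?_⟩
        rcases Int.natAbs_eq ((n : ℤ) * k) with h | h
        · rw [← natCast_zsmul, ← h, hj]
        · rw [← natCast_zsmul, ← neg_neg (((((n : ℤ) * k).natAbs) : ℤ)), ← h, neg_smul, hj,
            neg_zero]
      exact (QuotientAddGroup.eq_zero_iff _).2 haT
    have hbig : ℵ ≤ #(A ⧸ T) := by
      by_contra hlt
      push_neg at hlt
      have hA' : #A ≤ ℵ := by
        have e : #A = #((A ⧸ T) × T) :=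
          Cardinal.mk_congr AddSubgroup.addGroupEquivQuotientProdAddSubgroup
        rw [e, Cardinal.mk_prod, Cardinal.lift_id, Cardinal.lift_id]
        calc #(A ⧸ T) * #T ≤ ℵ * ℵ := mul_le_mul' hlt.le hT
          _ = ℵ := Cardinal.mul_eq_self h₁
      exact absurd h₂ (not_lt.2 hA')
    obtain ⟨B', hB'⟩ := IndexProofAux.torsionfree_case (A := A ⧸ T) ℵ h₁ hbig hQTF
    let f : A →+ (A ⧸ T) ⧸ B' := (QuotientAddGroup.mk' B').comp (QuotientAddGroup.mk' T)
    have hfs : Function.Surjective f :=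
      (QuotientAddGroup.mk'_surjective B').comp (QuotientAddGroup.mk'_surjective T)
    refine ⟨f.ker, ?_⟩
    rw [Cardinal.mk_congr (QuotientAddGroup.quotientKerEquivOfSurjective f hfs).toEquiv]
    exact hB'
end

section
/- Every uncountable abelian group has a proper subgroup of countably infinite index, i.e. a subgroup B with |A/B| = ℵ₀. -/
universe u



open Cardinal

instance : Fact ((0:ℚ) < 1) := ⟨one_pos⟩

instance : Countable (AddCircle (1:ℚ)) :=
  (QuotientAddGroup.mk'_surjective (AddSubgroup.zmultiples (1:ℚ))).countable



open Cardinal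

lemma key_of_hom {A : Type u} [AddCommGroup A] {Q : Type} [AddCommGroup Q] [Countable Q]
    (f : A →+ Q) (hinf : (Set.range f).Infinite) :
    ∃ B : AddSubgroup A, B ≠ ⊤ ∧ Cardinal.mk (A ⧸ B) = Cardinal.aleph0 := by
  refine ⟨f.ker, ?_, ?_⟩
  · intro h
    have : ∀ a : A, f a = 0 := fun a => by
      have : a ∈ f.ker := h ▸ AddSubgroup.mem_top a
      exact this
    apply hinf
    apply Set.Finite.subset (Set.finite_singleton (0 : Q))
    rintro _ ⟨a, rfl⟩
    simp [this a]
  · have e : (A ⧸ f.ker) ≃+ f.range := QuotientAddGroup.quotientKerEquivRange f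
    haveI : Countable (A ⧸ f.ker) := Countable.of_equiv _ e.toEquiv.symm
    haveI : Infinite ↥f.range := by
      rw [← Set.infinite_coe_iff] at hinf
      exact hinf
    haveI : Infinite (A ⧸ f.ker) := Infinite.of_injective _ e.toEquiv.symm.injective
    exact Cardinal.mk_eq_aleph0 _

lemma extend_from_subgroup {A : Type u} [AddCommGroup A] {Q : Type} [AddCommGroup Q]
    [DivisibleBy Q ℤ] (S : AddSubgroup A) (g : S →+ Q) :
    ∃ h : A →+ Q, ∀ x : S, h x = g x := by
  obtain ⟨h, hh⟩ := (Module.Baer.of_divisible Q).extension_property_addMonoidHom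
      S.subtype Subtype.coe_injective g
  exact ⟨h, fun x => by rw [← hh]; rfl⟩

lemma case_inf_order {A : Type u} [AddCommGroup A] (a : A) (ha : ¬ IsOfFinAddOrder a) :
    ∃ B : AddSubgroup A, B ≠ ⊤ ∧ Cardinal.mk (A ⧸ B) = Cardinal.aleph0 := by
  have hinj : Function.Injective (zmultiplesHom A a) := by
    intro n m h
    by_contra hne
    apply ha
    rw [isOfFinAddOrder_iff_zsmul_eq_zero]
    exact ⟨n - m, sub_ne_zero.mpr hne, by
      simp only [zmultiplesHom_apply] at h
      rw [sub_smul, h, sub_self]⟩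
  obtain ⟨h, hh⟩ := (Module.Baer.of_divisible ℚ).extension_property_addMonoidHom
      (zmultiplesHom A a) hinj (Int.castAddHom ℚ)
  apply key_of_hom h
  refine Set.infinite_of_injective_forall_mem (f := fun n : ℤ => (n : ℚ))
    (fun n m hnm => by simpa using hnm) (fun n => ⟨n • a, ?_⟩)
  have := DFunLike.congr_fun hh n
  simpa using this


noncomputable instance finsuppDivisible {M : Type} [AddCommGroup M] [DivisibleBy M ℤ] :
    DivisibleBy (ℕ →₀ M) ℤ :=
  AddCommGroup.divisibleByIntOfSMulTopEqTop _ fun {n} hn =>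
    AddSubgroup.map_top_of_surjective _ fun y =>
      ⟨y.sum fun i m => Finsupp.single i (DivisibleBy.div m n), by
        rw [Finsupp.sum]
        change n • _ = y
        rw [Finset.smul_sum]
        conv_rhs => rw [← Finsupp.sum_single y]
        rw [Finsupp.sum]
        refine Finset.sum_congr rfl fun i _ => ?_
        show n • Finsupp.single i (DivisibleBy.div (y i) n) = _
        rw [Finsupp.smul_single, DivisibleBy.div_cancel _ hn]⟩

noncomputable def phiZMod (p : ℕ) [NeZero p] : ZMod p →+ AddCircle (1 : ℚ) :=
  ZMod.lift p ⟨(zmultiplesHom _ (((p : ℚ)⁻¹ : ℚ) : AddCircle (1:ℚ))), by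
    simp only [zmultiplesHom_apply]
    rw [← AddCircle.coe_zsmul]
    convert AddCircle.coe_period (1:ℚ) using 2
    have : (p:ℚ) ≠ 0 := Nat.cast_ne_zero.mpr (NeZero.ne p)
    field_simp
    simp [this]⟩

lemma phiZMod_one_ne_zero (p : ℕ) (hp : 1 < p) [NeZero p] : phiZMod p 1 ≠ 0 := by
  have h1 : (phiZMod p) 1 = (((p : ℚ)⁻¹ : ℚ) : AddCircle (1:ℚ)) := by
    have : (1 : ZMod p) = ((1 : ℤ) : ZMod p) := by norm_cast
    rw [this, phiZMod, ZMod.lift_coe]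
    simp
  rw [h1]
  intro h
  rw [AddCircle.coe_eq_zero_iff] at h
  obtain ⟨n, hn⟩ := h
  have hp0 : (0:ℚ) < (p:ℚ)⁻¹ := by positivity
  have hp1 : ((p:ℚ)⁻¹ : ℚ) < 1 := by
    rw [inv_lt_one_iff₀]
    right
    exact_mod_cast hp
  rw [zsmul_eq_mul, mul_one] at hn
  have h0 : (0:ℚ) < (n:ℚ) := hn ▸ hp0
  have h1' : (n:ℚ) < 1 := hn ▸ hp1
  have : (0:ℤ) < n := by exact_mod_cast h0
  have : (1:ℤ) ≤ n := this
  have : (1:ℚ) ≤ (n:ℚ) := by exact_mod_cast this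
  linarith

lemma case_torsion (A : Type u) [AddCommGroup A] (p : ℕ) (hp : p.Prime)
    (hinf : Infinite (AddSubgroup.torsionBy A (p:ℤ))) :
    ∃ B : AddSubgroup A, B ≠ ⊤ ∧ Cardinal.mk (A ⧸ B) = Cardinal.aleph0 := by
  haveI := Fact.mk hp
  haveI : NeZero p := ⟨hp.pos.ne'⟩
  set S := AddSubgroup.torsionBy A (p:ℤ) with hS
  letI : Module (ZMod p) S := AddSubgroup.torsionBy.zmodModule
  let b := Module.Basis.ofVectorSpace (ZMod p) S
  haveI : Infinite (Module.Basis.ofVectorSpaceIndex (ZMod p) S) := by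
    rw [← not_finite_iff_infinite]
    intro hfin
    haveI : Module.Finite (ZMod p) S := Module.Finite.of_basis b
    haveI : Finite S := Module.finite_of_finite (ZMod p)
    exact not_finite S
  let e := Infinite.natEmbedding (Module.Basis.ofVectorSpaceIndex (ZMod p) S)
  let r : (Module.Basis.ofVectorSpaceIndex (ZMod p) S) → ℕ := Function.invFun e
  have hre : ∀ n, r (e n) = n := fun n => Function.leftInverse_invFun e.injective n
  let φ := phiZMod p
  let f : S →+ (ℕ →₀ AddCircle (1:ℚ)) :=
    ((Finsupp.mapRange.addMonoidHom φ).comp (Finsupp.mapDomain.addMonoidHom r)).comp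
      (b.repr.toLinearMap.toAddMonoidHom)
  obtain ⟨h, hh⟩ := extend_from_subgroup S f
  apply key_of_hom h
  refine Set.infinite_of_injective_forall_mem
      (f := fun n : ℕ => Finsupp.single n (φ 1)) ?_ ?_
  · exact Finsupp.single_left_injective (phiZMod_one_ne_zero p hp.one_lt)
  · intro n
    refine ⟨(b (e n) : A), ?_⟩
    rw [hh (b (e n))]
    show ((Finsupp.mapRange.addMonoidHom φ).comp (Finsupp.mapDomain.addMonoidHom r))
        (b.repr (b (e n))) = _
    rw [Module.Basis.repr_self]
    simp only [AddMonoidHom.comp_apply, Finsupp.mapDomain.addMonoidHom_apply,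
      Finsupp.mapDomain_single, Finsupp.mapRange.addMonoidHom_apply, Finsupp.mapRange_single,
      hre]


open AddSubgroup in
lemma torsionBy_finite_of_primes {A : Type u} [AddCommGroup A]
    (h2 : ∀ p : ℕ, p.Prime → Finite (AddSubgroup.torsionBy A (p:ℤ)))
    (n : ℕ) (hn : n ≠ 0) : Finite (AddSubgroup.torsionBy A (n:ℤ)) := by
  induction n using Nat.strong_induction_on with
  | _ n IH =>
    rcases eq_or_ne n 1 with rfl | hn1
    · have : ∀ x : A, x ∈ AddSubgroup.torsionBy A ((1:ℕ):ℤ) → x = 0 := by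
        intro x hx
        have := AddSubgroup.torsionBy.nsmul_iff.mp hx
        simpa using this
      refine Finite.of_injective (fun _ : (AddSubgroup.torsionBy A ((1:ℕ):ℤ)) => (0 : Unit)) ?_
      intro x y _
      ext
      rw [this x x.2, this y y.2]
    · obtain ⟨p, hp, m, rfl⟩ : ∃ p, p.Prime ∧ ∃ m, n = p * m := by
        obtain ⟨p, hp, hdvd⟩ := Nat.exists_prime_and_dvd hn1
        exact ⟨p, hp, hdvd⟩
      have hm : m ≠ 0 := by rintro rfl; simp at hn
      have hmlt : m < p * m := by
        have : 1 < p := hp.one_lt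
        calc m = 1 * m := (one_mul m).symm
        _ < p * m := (Nat.mul_lt_mul_right (Nat.pos_of_ne_zero hm)).mpr this
      -- the hom x ↦ p • x from torsionBy (p*m) to torsionBy m
      set Tn := AddSubgroup.torsionBy A ((p * m : ℕ) : ℤ) with hTn
      set Tm := AddSubgroup.torsionBy A ((m : ℕ) : ℤ) with hTm
      have hmem : ∀ x : Tn, ((p • (x : A)) ∈ Tm) := by
        intro x
        rw [AddSubgroup.torsionBy.nsmul_iff, smul_smul, mul_comm m p]
        exact AddSubgroup.torsionBy.nsmul_iff.mp x.2
      let F : Tn →+ Tm := AddMonoidHom.mk' (fun x => ⟨p • (x : A), hmem x⟩) (by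
        intro x y
        ext
        simp [smul_add])
      haveI : Finite Tm := IH m hmlt hm
      haveI : Finite F.range := Subtype.finite
      haveI : Finite (Tn ⧸ F.ker) := Finite.of_equiv _ (QuotientAddGroup.quotientKerEquivRange F).toEquiv.symm
      haveI : Finite F.ker := by
        haveI : Finite (AddSubgroup.torsionBy A ((p:ℕ):ℤ)) := h2 p hp
        refine Finite.of_injective (fun x : F.ker => (⟨(x : Tn), ?_⟩ : AddSubgroup.torsionBy A ((p:ℕ):ℤ))) ?_
        · rw [AddSubgroup.torsionBy.nsmul_iff]
          have hx : F (x : Tn) = 0 := x.2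
          have : p • ((x : Tn) : A) = 0 := by
            have := congrArg (Subtype.val) hx
            simpa [F] using this
          exact this
        · intro x y hxy
          apply Subtype.ext
          apply Subtype.ext
          have := congrArg Subtype.val hxy
          exact this
      exact Finite.of_equiv _ (addGroupEquivQuotientProdAddSubgroup (s := F.ker)).symm


lemma countable_of_torsion_finite {A : Type u} [AddCommGroup A]
    (h1 : ∀ a : A, IsOfFinAddOrder a)
    (hfin : ∀ n : ℕ, n ≠ 0 → Finite (AddSubgroup.torsionBy A (n:ℤ))) :
    Countable A := by
  rw [← Set.countable_univ_iff]
  have : (Set.univ : Set A) = ⋃ n : ℕ, (AddSubgroup.torsionBy A (((n+1 : ℕ)):ℤ) : Set A) := by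
    ext a
    simp only [Set.mem_univ, Set.mem_iUnion, true_iff, SetLike.mem_coe]
    obtain ⟨n, hn, hna⟩ := isOfFinAddOrder_iff_nsmul_eq_zero.mp (h1 a)
    refine ⟨n - 1, AddSubgroup.torsionBy.nsmul_iff.mpr ?_⟩
    rwa [Nat.sub_add_cancel hn]
  rw [this]
  refine Set.countable_iUnion fun n => ?_
  haveI := hfin (n+1) (Nat.succ_ne_zero n)
  exact (Set.toFinite _).countable

/-- Every uncountable abelian group has a proper subgroup of countably infinite index,
i.e. a subgroup `B` with `|A ⧸ B| = ℵ₀`. -/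
theorem uncountable_abelian_has_proper_subgroup_of_countable_index (A : Type u) [AddCommGroup A]
    (hA : Cardinal.aleph0 < Cardinal.mk A) :
    ∃ B : AddSubgroup A, B ≠ ⊤ ∧ Cardinal.mk (A ⧸ B) = Cardinal.aleph0 := by
  by_cases htor : ∀ a : A, IsOfFinAddOrder a
  · by_cases hfin : ∀ p : ℕ, p.Prime → Finite (AddSubgroup.torsionBy A (p:ℤ))
    · exfalso
      have : Countable A :=
        countable_of_torsion_finite htor (torsionBy_finite_of_primes hfin)
      exact absurd hA (not_lt.mpr Cardinal.mk_le_aleph0)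
    · push_neg at hfin
      obtain ⟨p, hp, hinf⟩ := hfin
      exact case_torsion A p hp hinf
  · push_neg at htor
    obtain ⟨a, ha⟩ := htor
    exact case_inf_order a ha
end

section
/- Let A be an uncountable abelian group, ℵ a cardinal with ℵ₀ ≤ ℵ < |A|, and suppose the index of the torsion subgroup of A in A is at least ℵ. Then there is a subgroup B of A of index ℵ such that A/B is torsion free. -/
universe u

/-- The Mathlib (Dec 2024) definition, since removed: no nontrivial element has finite order. -/
def AddMonoid.IsTorsionFree (G : Type*) [AddMonoid G] : Prop :=
  ∀ g : G, g ≠ 0 → ¬IsOfFinAddOrder g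

open Cardinal TensorProduct

/-- Let `A` be an uncountable abelian group, `ℵ` a cardinal with `ℵ₀ ≤ ℵ < |A|`,
and suppose the index of the torsion subgroup of `A` in `A` is at least `ℵ`.
Then there is a subgroup `B` of `A` of index `ℵ` such that `A ⧸ B` is torsion free. -/
theorem exists_pure_subgroup_of_index_with_torsionfree_quotient (A : Type u) [AddCommGroup A]
    (hA : Cardinal.aleph0 < Cardinal.mk A)
    (ℵ : Cardinal.{u}) (h₁ : Cardinal.aleph0 ≤ ℵ) (h₂ : ℵ < Cardinal.mk A)
    (htor : ℵ ≤ Cardinal.mk (A ⧸ AddCommGroup.torsion A)) :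
    ∃ B : AddSubgroup A, Cardinal.mk (A ⧸ B) = ℵ ∧ AddMonoid.IsTorsionFree (A ⧸ B) := by
  classical
  set S := nonZeroDivisors ℤ with hS
  let V := ℚ ⊗[ℤ] A
  let φ : A →ₗ[ℤ] V := TensorProduct.mk ℤ ℚ A 1
  haveI hloc : IsLocalizedModule S φ :=
    (isLocalizedModule_iff_isBaseChange S ℚ φ).mpr (TensorProduct.isBaseChange ℤ A ℚ)
  -- kernel of φ as an `AddMonoidHom` is the torsion subgroup
  have hker : (φ.toAddMonoidHom).ker = AddCommGroup.torsion A := by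
    rw [← Submodule.torsion_int]
    ext a
    rw [AddMonoidHom.mem_ker, Submodule.mem_toAddSubgroup, Submodule.mem_torsion_iff]
    exact IsLocalizedModule.eq_zero_iff S φ
  -- hence the image of `φ` has cardinality `≥ ℵ`
  have hrange : Cardinal.mk (φ.toAddMonoidHom).range = Cardinal.mk (A ⧸ AddCommGroup.torsion A) := by
    rw [← hker]
    exact (Cardinal.mk_congr (QuotientAddGroup.quotientKerEquivRange φ.toAddMonoidHom).toEquiv).symm
  have hrange' : ℵ ≤ Cardinal.mk (φ.toAddMonoidHom).range := hrange ▸ htor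
  -- `V` is nontrivial
  haveI : Nontrivial ((φ.toAddMonoidHom).range) := by
    rw [← Cardinal.one_lt_iff_nontrivial]
    exact lt_of_lt_of_le (lt_of_lt_of_le one_lt_aleph0 h₁) hrange'
  haveI : Nontrivial V := by
    obtain ⟨x, y, hxy⟩ := exists_pair_ne ((φ.toAddMonoidHom).range)
    exact ⟨x, y, fun h => hxy (Subtype.ext h)⟩
  -- a basis of `V` over `ℚ`
  let ι := Module.Free.ChooseBasisIndex ℚ V
  let b : Module.Basis ι ℚ V := Module.Free.chooseBasis ℚ V
  haveI : Nonempty ι := b.index_nonempty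
  have hVcard : Cardinal.mk V = max (Cardinal.mk ι) Cardinal.aleph0 := by
    rw [Cardinal.mk_congr b.repr.toEquiv]
    rw [Cardinal.mk_finsupp_lift_of_infinite']
    simp
  have key : ℵ ≤ max (Cardinal.mk ι) Cardinal.aleph0 := by
    rw [← hVcard]
    exact le_trans hrange' (Cardinal.mk_le_of_injective Subtype.val_injective)
  -- choose a subset of the basis of size `κ := min ℵ (#ι)`
  set κ := min ℵ (Cardinal.mk ι) with hκ
  have hκℵ : κ ≤ ℵ := min_le_left _ _
  obtain ⟨s, hs⟩ : ∃ s : Set ι, Cardinal.mk s = κ :=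
    Cardinal.le_mk_iff_exists_set.mp (min_le_right _ _)
  haveI : Nonempty s := by
    rw [← Cardinal.mk_ne_zero_iff, hs, hκ]
    intro h
    rcases min_eq_iff.mp h with h' | h'
    · exact (lt_of_lt_of_le aleph0_pos h₁).ne' h'.1
    · exact (Cardinal.mk_ne_zero ι) h'.1
  -- the projection onto the coordinates in `s`
  let f : V →ₗ[ℚ] (s →₀ ℚ) :=
    b.constr ℚ (fun i => if h : i ∈ s then Finsupp.single ⟨i, h⟩ 1 else 0)
  have hf : Function.Surjective f := by
    rw [← LinearMap.range_eq_top, ← top_le_iff, ← Finsupp.basisSingleOne.span_eq,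
      Submodule.span_le]
    rintro - ⟨j, rfl⟩
    refine ⟨b j, ?_⟩
    simp [f, Module.Basis.constr_basis, j.2]
  -- the composite homomorphism and its kernel
  let ψ : A →+ (s →₀ ℚ) := f.toAddMonoidHom.comp φ.toAddMonoidHom
  refine ⟨ψ.ker, ?_, ?_⟩
  · -- cardinality computation
    have hq : Cardinal.mk (A ⧸ ψ.ker) = Cardinal.mk ψ.range :=
      Cardinal.mk_congr (QuotientAddGroup.quotientKerEquivRange ψ).toEquiv
    -- the range of `ψ` spans the whole space
    have hspanφ : Submodule.span ℚ (Set.range φ) = ⊤ := by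
      rw [← top_le_iff]
      intro x _
      have hx : x ∈ Submodule.span ℤ { t : V | ∃ m n, m ⊗ₜ n = t } := by
        erw [TensorProduct.span_tmul_eq_top]; trivial
      refine Submodule.span_induction ?_ (Submodule.zero_mem _)
        (fun a b _ _ ha hb => Submodule.add_mem _ ha hb)
        (fun n a _ ha => ?_) hx
      · rintro - ⟨q, a, rfl⟩
        have : q ⊗ₜ[ℤ] a = q • ((1 : ℚ) ⊗ₜ[ℤ] a) := by
          rw [TensorProduct.smul_tmul', smul_eq_mul, mul_one]
        rw [this]
        exact Submodule.smul_mem _ q (Submodule.subset_span ⟨a, rfl⟩)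
      · exact zsmul_mem ha n
    have hspanψ : Submodule.span ℚ (Set.range ψ) = ⊤ := by
      have : Set.range ψ = f '' Set.range φ := by
        rw [← Set.range_comp]; rfl
      rw [this, Submodule.span_image, hspanφ, Submodule.map_top, LinearMap.range_eq_top.mpr hf]
    -- lower bound `κ`
    have hrank : Module.rank ℚ (s →₀ ℚ) = κ := by
      rw [rank_finsupp_self, hs, Cardinal.lift_id']
    have hlow : κ ≤ Cardinal.mk ψ.range := by
      rw [← hrank]
      have := rank_span_le (R := ℚ) (Set.range ψ)
      rw [hspanψ] at this
      calc Module.rank ℚ (s →₀ ℚ) = Module.rank ℚ (⊤ : Submodule ℚ (s →₀ ℚ)) :=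
          (rank_top ℚ (s →₀ ℚ)).symm
        _ ≤ Cardinal.mk (Set.range ψ) := this
        _ = Cardinal.mk ψ.range := rfl
    -- range is infinite
    have hx0 : ∃ x : s →₀ ℚ, x ∈ Set.range ψ ∧ x ≠ 0 := by
      by_contra h
      push_neg at h
      have hsub : Set.range ψ ⊆ {0} := fun x hx => h x hx
      have h0 : Submodule.span ℚ (Set.range ψ) ≤ ⊥ := by
        rw [← Submodule.span_zero_singleton (R := ℚ) (M := s →₀ ℚ)]
        exact Submodule.span_mono hsub
      rw [hspanψ, top_le_iff] at h0
      obtain ⟨x, y, hxy⟩ := exists_pair_ne (s →₀ ℚ)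
      apply hxy
      have hx : x ∈ (⊥ : Submodule ℚ (s →₀ ℚ)) := h0.symm ▸ Submodule.mem_top
      have hy : y ∈ (⊥ : Submodule ℚ (s →₀ ℚ)) := h0.symm ▸ Submodule.mem_top
      rw [Submodule.mem_bot] at hx hy
      rw [hx, hy]
    obtain ⟨x, hxmem, hxne⟩ := hx0
    have hxmem' : x ∈ ψ.range := hxmem
    haveI : Infinite ψ.range := by
      refine Infinite.of_injective
        (fun n : ℕ => (⟨n • x, AddSubgroup.nsmul_mem _ hxmem' n⟩ : ψ.range)) ?_
      intro m n hmn
      have hmn' : m • x = n • x := congrArg Subtype.val hmn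
      rw [← Nat.cast_smul_eq_nsmul ℚ, ← Nat.cast_smul_eq_nsmul ℚ] at hmn'
      have hz : ((m : ℚ) - n) • x = 0 := by rw [sub_smul, hmn', sub_self]
      rcases smul_eq_zero.mp hz with hc | hc
      · have : (m : ℚ) = n := by linarith [sub_eq_zero.mp hc]
        exact_mod_cast this
      · exact absurd hc hxne
    have hinf : Cardinal.aleph0 ≤ Cardinal.mk ψ.range := Cardinal.aleph0_le_mk _
    have hup : Cardinal.mk ψ.range ≤ max κ Cardinal.aleph0 := by
      have h1' : Cardinal.mk ψ.range ≤ Cardinal.mk (s →₀ ℚ) :=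
        Cardinal.mk_le_of_injective Subtype.val_injective
      have h2' : Cardinal.mk (s →₀ ℚ) = max κ Cardinal.aleph0 := by
        rw [Cardinal.mk_finsupp_lift_of_infinite']
        simp [hs]
      exact h2' ▸ h1'
    rw [hq]
    refine le_antisymm (hup.trans (max_le hκℵ h₁)) ?_
    rcases le_max_iff.mp key with hcase | hcase
    · exact le_trans (le_of_eq (min_eq_left hcase).symm) hlow
    · exact le_trans hcase hinf
  · -- torsion-freeness
    intro g hg hfin
    obtain ⟨n, hn, hng⟩ := isOfFinAddOrder_iff_nsmul_eq_zero.mp hfin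
    apply hg
    let e := QuotientAddGroup.quotientKerEquivRange ψ
    have h1 : ((e g : ψ.range) : s →₀ ℚ) = 0 := by
      have h2 : (n : ℚ) • ((e g : ψ.range) : s →₀ ℚ) = 0 := by
        rw [Nat.cast_smul_eq_nsmul]
        have : e (n • g) = 0 := by rw [hng, map_zero]
        have h3 : n • (e g) = 0 := by rw [← map_nsmul, this]
        calc n • ((e g : ψ.range) : s →₀ ℚ) = ((n • e g : ψ.range) : s →₀ ℚ) := rfl
          _ = 0 := by rw [h3]; rfl
      rcases smul_eq_zero.mp h2 with h | h
      · exact absurd (Nat.cast_eq_zero.mp h) hn.ne'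
      · exact h
    have h4 : e g = 0 := Subtype.ext h1
    exact e.injective (h4.trans (map_zero e).symm)
end

section
/- Let G be an infinite compact Hausdorff topological group with identity component G₀. Then w(G) = max(w(G₀), w(G/G₀)), where w denotes the topological weight. -/
universe u

open TopologicalSpace Set Cardinal Topology Pointwise

/-- The weight of a topological space: the minimal cardinality of a basis of the topology. -/
noncomputable def topWeight (X : Type u) [TopologicalSpace X] : Cardinal.{u} :=
  sInf { c : Cardinal.{u} |
    ∃ B : Set (Set X), TopologicalSpace.IsTopologicalBasis B ∧ Cardinal.mk B = c }

section aux
variable {X Y : Type u} [TopologicalSpace X] [TopologicalSpace Y]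

lemma exists_basis_topWeight (X : Type u) [TopologicalSpace X] :
    ∃ B : Set (Set X), IsTopologicalBasis B ∧ Cardinal.mk B = topWeight X := 
by
  have hne : { c : Cardinal.{u} |
      ∃ B : Set (Set X), IsTopologicalBasis B ∧ Cardinal.mk B = c }.Nonempty :=
    ⟨Cardinal.mk {U : Set X | IsOpen U}, {U : Set X | IsOpen U}, isTopologicalBasis_opens, rfl⟩
  exact csInf_mem hne

lemma topWeight_le {B : Set (Set X)} (hB : IsTopologicalBasis B) :
    topWeight X ≤ Cardinal.mk B :=
  csInf_le' ⟨B, hB, rfl⟩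

lemma topWeight_le_of_inducing {f : X → Y} (hf : IsInducing f) :
    topWeight X ≤ topWeight Y := by
  obtain ⟨B, hB, hcard⟩ := exists_basis_topWeight Y
  calc topWeight X ≤ Cardinal.mk ((preimage f) '' B) := topWeight_le (hB.isInducing hf)
    _ ≤ Cardinal.mk B := Cardinal.mk_image_le
    _ = topWeight Y := hcard

lemma topWeight_le_of_openQuotient {f : X → Y} (hf : IsQuotientMap f) (hop : IsOpenMap f) :
    topWeight Y ≤ topWeight X := by
  obtain ⟨B, hB, hcard⟩ := exists_basis_topWeight X
  calc topWeight Y ≤ Cardinal.mk ((image f) '' B) := topWeight_le (hB.isQuotientMap hf hop)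
    _ ≤ Cardinal.mk B := Cardinal.mk_image_le
    _ = topWeight X := hcard

lemma aleph0_le_mk_basis [T0Space X] [Infinite X] {B : Set (Set X)}
    (hB : IsTopologicalBasis B) : ℵ₀ ≤ Cardinal.mk B := by
  by_contra h
  push_neg at h
  have hfin : Finite B := (Cardinal.lt_aleph0_iff_finite).mp h
  have hinj : Function.Injective (fun x : X => {b : B | x ∈ (b : Set X)}) := by
    intro x y hxy
    simp only [Set.ext_iff, Set.mem_setOf_eq] at hxy
    refine Inseparable.eq ?_
    rw [inseparable_iff_forall_isOpen]
    intro U hU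
    constructor
    · intro hx
      obtain ⟨b, hbB, hxb, hbU⟩ := hB.exists_subset_of_mem_open hx hU
      exact hbU ((hxy ⟨b, hbB⟩).mp hxb)
    · intro hy
      obtain ⟨b, hbB, hyb, hbU⟩ := hB.exists_subset_of_mem_open hy hU
      exact hbU ((hxy ⟨b, hbB⟩).mpr hyb)
  have : Finite (Set B) := inferInstance
  exact (Finite.of_injective _ hinj).not_infinite ‹Infinite X›

lemma aleph0_le_topWeight [T0Space X] [Infinite X] : ℵ₀ ≤ topWeight X := by
  obtain ⟨B, hB, hcard⟩ := exists_basis_topWeight X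
  rw [← hcard]
  exact aleph0_le_mk_basis hB

end aux

section lemA
variable {G : Type u} [Group G] [TopologicalSpace G] [IsTopologicalGroup G] [CompactSpace G]

lemma topWeight_le_of_nhds_one' (S : Set (Set G))
    (hop : ∀ N ∈ S, IsOpen N)
    (hS : ∀ O ∈ nhds (1 : G), ∃ N ∈ S, 1 ∈ N ∧ N ⊆ O) :
    ∃ B : Set (Set G), IsTopologicalBasis B ∧ Cardinal.mk B ≤ max (Cardinal.mk S) ℵ₀ := by
  classical
  -- choose V N : symmetric-ish open nbhd of 1 with V⁻¹ * V ⊆ N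
  have hV : ∀ N : S, ∃ V : Set G, IsOpen V ∧ 1 ∈ V ∧
      ((1 : G) ∈ (N : Set G) → ∀ a ∈ V, ∀ b ∈ V, a⁻¹ * b ∈ (N : Set G)) := by
    rintro ⟨N, hN⟩
    by_cases h1 : (1 : G) ∈ N
    · have hNnhds : N ∈ nhds (1 : G) := (hop N hN).mem_nhds h1
      obtain ⟨V₀, hV₀open, hV₀1, hV₀mul⟩ := exists_open_nhds_one_mul_subset hNnhds
      refine ⟨V₀ ∩ V₀⁻¹, hV₀open.inter hV₀open.inv, ⟨hV₀1, by simpa using hV₀1⟩, ?_⟩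
      intro _ a ha b hb
      exact hV₀mul (Set.mul_mem_mul (Set.mem_inv.mp ha.2) hb.1)
    · exact ⟨Set.univ, isOpen_univ, trivial, fun h => absurd h h1⟩
  choose V hVopen hV1 hVmul using hV
  -- finite covers by translates
  have hcov : ∀ N : S, ∃ t : Finset G, Set.univ ⊆ ⋃ x ∈ t, x • V N := by
    intro N
    apply IsCompact.elim_finite_subcover isCompact_univ (fun x : G => x • V N)
      (fun x => (hVopen N).smul x)
    intro x _
    exact Set.mem_iUnion.mpr ⟨x, ⟨1, hV1 N, by simp⟩⟩
  choose t ht using hcov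
  set B : Set (Set G) := ⋃ N : S, (fun x : G => x • V N) '' (t N : Set G) with hB
  have hBbasis : IsTopologicalBasis B := by
    apply isTopologicalBasis_of_isOpen_of_nhds
    · rintro u hu
      simp only [hB, Set.mem_iUnion, Set.mem_image] at hu
      obtain ⟨N, x, -, rfl⟩ := hu
      exact (hVopen N).smul x
    · intro x O hxO hO
      have hmem : (fun y => x * y) ⁻¹' O ∈ nhds (1 : G) := by
        have : Continuous fun y : G => x * y := continuous_mul_left x
        apply this.continuousAt.preimage_mem_nhds
        simpa using hO.mem_nhds hxO
      obtain ⟨N, hNS, hN1, hNsub⟩ := hS _ hmem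
      have hx : x ∈ ⋃ y ∈ t ⟨N, hNS⟩, y • V ⟨N, hNS⟩ := ht ⟨N, hNS⟩ trivial
      simp only [Set.mem_iUnion] at hx
      obtain ⟨y, hyt, hxy⟩ := hx
      refine ⟨y • V ⟨N, hNS⟩, ?_, hxy, ?_⟩
      · exact Set.mem_iUnion.mpr ⟨⟨N, hNS⟩, Set.mem_image_of_mem _ hyt⟩
      · rintro z ⟨v, hv, rfl⟩
        obtain ⟨w, hw, hxw⟩ := hxy
        simp only [smul_eq_mul] at hxw ⊢
        have hN : w⁻¹ * v ∈ N := hVmul ⟨N, hNS⟩ hN1 w hw v hv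
        have h2 : x * (w⁻¹ * v) ∈ O := hNsub hN
        have key : y * v = x * (w⁻¹ * v) := by rw [← hxw]; group
        rwa [key]
  refine ⟨B, hBbasis, ?_⟩
  calc Cardinal.mk B ≤ Cardinal.mk S * ⨆ N : S, Cardinal.mk ((fun x : G => x • V N) '' (t N : Set G)) :=
        Cardinal.mk_iUnion_le _
    _ ≤ Cardinal.mk S * ℵ₀ := by
        apply mul_le_mul_right
        apply ciSup_le'
        intro N
        exact le_of_lt (Cardinal.lt_aleph0_of_finite _)
    _ ≤ max (max (Cardinal.mk S) ℵ₀) ℵ₀ := Cardinal.mul_le_max _ _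
    _ = max (Cardinal.mk S) ℵ₀ := by rw [max_assoc, max_self]

end lemA

/-- For an infinite compact Hausdorff group $G$ with identity component $G_0$,
one has $w(G)=\max\{w(G_0), w(G/G_0)\}$. -/
theorem weight_eq_max_weight_component_weight_quotient (G : Type u) [Group G]
    [TopologicalSpace G] [IsTopologicalGroup G] [CompactSpace G] [T2Space G] [Infinite G] :
    topWeight G = max (topWeight (Subgroup.connectedComponentOfOne G))
      (topWeight (G ⧸ Subgroup.connectedComponentOfOne G)) := by
  classical
  set H := Subgroup.connectedComponentOfOne G with hHdef
  haveI hnorm : H.Normal := by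
    constructor
    intro g hg h
    have hc : Continuous fun x : G => h * x * h⁻¹ :=
      ((continuous_mul_left h).mul continuous_const)
    have himg := hc.image_connectedComponent_subset (1 : G)
    have h1 : h * 1 * h⁻¹ = 1 := by group
    have : h * g * h⁻¹ ∈ connectedComponent (h * 1 * h⁻¹) := himg ⟨g, hg, rfl⟩
    rw [h1] at this
    exact this
  have hclosed : IsClosed (H : Set G) := isClosed_connectedComponent
  haveI : IsClosed (H : Set G) := hclosed
  haveI : CompactSpace ↥H := isCompact_iff_compactSpace.mp hclosed.isCompact
  -- lower bounds
  have hlow₀ : topWeight ↥H ≤ topWeight G := topWeight_le_of_inducing IsInducing.subtypeVal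
  have hlow₁ : topWeight (G ⧸ H) ≤ topWeight G :=
    topWeight_le_of_openQuotient (QuotientGroup.isQuotientMap_mk H) QuotientGroup.isOpenMap_coe
  set m := max (topWeight ↥H) (topWeight (G ⧸ H)) with hm
  -- m is infinite
  have hminf : ℵ₀ ≤ m := by
    by_cases hfin : Finite ↥H
    · haveI : Infinite (G ⧸ H) := by
        rw [← not_finite_iff_infinite]
        intro hq
        exact (Finite.of_equiv _ (Subgroup.groupEquivQuotientProdSubgroup (s := H)).symm).false
      exact le_max_of_le_right (aleph0_le_topWeight)
    · haveI : Infinite ↥H := not_finite_iff_infinite.mp hfin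
      exact le_max_of_le_left (aleph0_le_topWeight)
  -- bases of the pieces
  obtain ⟨B₀, hB₀, hcard₀⟩ := exists_basis_topWeight ↥H
  obtain ⟨B₁, hB₁, hcard₁⟩ := exists_basis_topWeight (G ⧸ H)
  -- choose open sets in G inducing the basis elements of H
  have hv : ∀ b : B₀, ∃ V : Set G, IsOpen V ∧ Subtype.val ⁻¹' V = (b : Set ↥H) := by
    rintro ⟨b, hb⟩
    have : IsOpen b := hB₀.isOpen hb
    rwa [IsInducing.subtypeVal.isOpen_iff] at this
  choose v hvopen hvpre using hv
  -- choose the shrunk open sets W i j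
  have hWex : ∀ i j : B₀, ∃ W : Set G, IsOpen W ∧
      (closure (Subtype.val '' (j : Set ↥H)) ⊆ v i →
        closure (Subtype.val '' (j : Set ↥H)) ⊆ W ∧ closure W ∩ (H : Set G) ⊆ v i) := by
    intro i j
    by_cases hcl : closure (Subtype.val '' (j : Set ↥H)) ⊆ v i
    · have hs : IsClosed (closure (Subtype.val '' (j : Set ↥H))) := isClosed_closure
      have ht : IsClosed ((H : Set G) \ v i) := hclosed.sdiff (hvopen i)
      have hdisj : Disjoint (closure (Subtype.val '' (j : Set ↥H))) ((H : Set G) \ v i) := by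
        rw [Set.disjoint_left]
        intro x hx hx'
        exact hx'.2 (hcl hx)
      obtain ⟨U, Vn, hUopen, hVnopen, hsU, htV, hUV⟩ := normal_separation hs ht hdisj
      refine ⟨U, hUopen, fun _ => ⟨hsU, ?_⟩⟩
      rintro x ⟨hxcl, hxH⟩
      by_contra hxvi
      have hxVn : x ∈ Vn := htV ⟨hxH, hxvi⟩
      have hUc : closure U ⊆ Vnᶜ := by
        apply closure_minimal _ hVnopen.isClosed_compl
        intro u hu
        exact Set.disjoint_left.mp hUV hu
      exact hUc hxcl hxVn
    · exact ⟨∅, isOpen_empty, fun h => absurd h hcl⟩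
  choose W hWopen hWprop using hWex
  -- the neighborhood family at 1
  set S : Set (Set G) := Set.range (fun p : (B₀ × B₀) × B₁ =>
    W p.1.1 p.1.2 ∩ QuotientGroup.mk ⁻¹' (p.2 : Set (G ⧸ H))) with hSdef
  have hSopen : ∀ N ∈ S, IsOpen N := by
    rintro _ ⟨p, rfl⟩
    exact (hWopen _ _).inter ((hB₁.isOpen p.2.2).preimage QuotientGroup.continuous_mk)
  have hSnhds : ∀ O ∈ nhds (1 : G), ∃ N ∈ S, 1 ∈ N ∧ N ⊆ O := by
    intro O hO
    obtain ⟨O', hO'sub, hO'open, hO'1⟩ := mem_nhds_iff.mp hO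
    set e : ↥H := ⟨1, H.one_mem⟩ with he_def
    have hO₀open : IsOpen (Subtype.val ⁻¹' O' : Set ↥H) :=
      hO'open.preimage continuous_subtype_val
    have he : e ∈ (Subtype.val ⁻¹' O' : Set ↥H) := hO'1
    obtain ⟨i, hiB, hei, hisub⟩ := hB₀.exists_subset_of_mem_open he hO₀open
    have hi_nhds : i ∈ nhds e := (hB₀.isOpen hiB).mem_nhds hei
    obtain ⟨C, hCnhds, hCclosed, hCsub⟩ := exists_mem_nhds_isClosed_subset hi_nhds
    obtain ⟨j, hjB, hej, hjsub⟩ := hB₀.exists_subset_of_mem_open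
      (mem_interior_iff_mem_nhds.mpr hCnhds) isOpen_interior
    have hjC : closure j ⊆ C := closure_minimal (hjsub.trans interior_subset) hCclosed
    have hemb : IsClosedEmbedding (Subtype.val : ↥H → G) :=
      hclosed.isClosedEmbedding_subtypeVal
    have hclj : closure (Subtype.val '' ((⟨j, hjB⟩ : B₀) : Set ↥H)) ⊆ v ⟨i, hiB⟩ := by
      rw [hemb.closure_image_eq]
      calc Subtype.val '' closure j ⊆ Subtype.val '' i :=
            Set.image_mono (hjC.trans hCsub)
        _ ⊆ v ⟨i, hiB⟩ := by
            rintro x ⟨y, hy, rfl⟩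
            have hy' : y ∈ Subtype.val ⁻¹' v ⟨i, hiB⟩ := by
              rw [hvpre ⟨i, hiB⟩]; exact hy
            exact hy'
    obtain ⟨hWsub, hWcap⟩ := hWprop ⟨i, hiB⟩ ⟨j, hjB⟩ hclj
    set W' := W ⟨i, hiB⟩ ⟨j, hjB⟩ with hW'def
    have h1W : (1 : G) ∈ W' := hWsub (subset_closure ⟨e, hej, rfl⟩)
    set K := closure W' ∩ O'ᶜ with hKdef
    have hKcomp : IsCompact K := (isClosed_closure.inter hO'open.isClosed_compl).isCompact
    have hKH : ∀ x ∈ K, x ∉ (H : Set G) := by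
      rintro x ⟨hxcl, hxO'⟩ hxH
      have hxvi : x ∈ v ⟨i, hiB⟩ := hWcap ⟨hxcl, hxH⟩
      have : (⟨x, hxH⟩ : ↥H) ∈ (Subtype.val ⁻¹' v ⟨i, hiB⟩ : Set ↥H) := hxvi
      rw [hvpre ⟨i, hiB⟩] at this
      exact hxO' (hisub this)
    set Q : Set (G ⧸ H) := QuotientGroup.mk '' K with hQdef
    have hQclosed : IsClosed Q := (hKcomp.image QuotientGroup.continuous_mk).isClosed
    have hQ1 : (1 : G ⧸ H) ∈ Qᶜ := by
      rintro ⟨k, hk, hk1⟩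
      exact hKH k hk ((QuotientGroup.eq_one_iff k).mp hk1)
    obtain ⟨w, hwB, hw1, hwsub⟩ := hB₁.exists_subset_of_mem_open hQ1 hQclosed.isOpen_compl
    refine ⟨W' ∩ QuotientGroup.mk ⁻¹' w,
      ⟨((⟨i, hiB⟩, ⟨j, hjB⟩), ⟨w, hwB⟩), rfl⟩, ⟨h1W, ?_⟩, ?_⟩
    · show QuotientGroup.mk (1 : G) ∈ w
      rw [QuotientGroup.mk_one]
      exact hw1
    · rintro x ⟨hxW, hxw⟩
      by_cases hxO' : x ∈ O'
      · exact hO'sub hxO'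
      · exfalso
        have hxK : x ∈ K := ⟨subset_closure hxW, hxO'⟩
        exact hwsub hxw ⟨x, hxK, rfl⟩
  -- upper bound
  obtain ⟨B, hBbasis, hBcard⟩ := topWeight_le_of_nhds_one' S hSopen hSnhds
  have hScard : Cardinal.mk S ≤ m := by
    have h1 : Cardinal.mk S ≤ Cardinal.mk ((B₀ × B₀) × B₁) := Cardinal.mk_range_le
    have h2 : Cardinal.mk ((B₀ × B₀) × B₁) =
        Cardinal.mk B₀ * Cardinal.mk B₀ * Cardinal.mk B₁ := by
      simp [Cardinal.mk_prod]
    have h0m : Cardinal.mk B₀ ≤ m := hcard₀ ▸ le_max_left _ _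
    have h1m : Cardinal.mk B₁ ≤ m := hcard₁ ▸ le_max_right _ _
    have h00 : Cardinal.mk B₀ * Cardinal.mk B₀ ≤ m :=
      le_trans (Cardinal.mul_le_max _ _) (by
        simp only [max_le_iff]
        exact ⟨⟨h0m, h0m⟩, hminf⟩)
    calc Cardinal.mk S ≤ Cardinal.mk B₀ * Cardinal.mk B₀ * Cardinal.mk B₁ := h2 ▸ h1
      _ ≤ max (max (Cardinal.mk B₀ * Cardinal.mk B₀) (Cardinal.mk B₁)) ℵ₀ :=
          Cardinal.mul_le_max _ _
      _ ≤ m := by simp only [max_le_iff]; exact ⟨⟨h00, h1m⟩, hminf⟩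
  have hupper : topWeight G ≤ m :=
    le_trans (topWeight_le hBbasis) (le_trans hBcard (by
      simp only [max_le_iff]; exact ⟨hScard, hminf⟩))
  exact le_antisymm hupper (max_le hlow₀ hlow₁)
end

section
/- Every infinite profinite group G is homeomorphic, as a topological space, to the product (ℤ/2ℤ)^{w(G)}, where w(G) is the weight of G. -/
set_option linter.unusedSectionVars false
set_option maxHeartbeats 1000000

universe u

universe v

namespace PHC
open TopologicalSpace Topology Pointwise

namespace Cantor

lemma exP (c : ℕ) (s : ℕ → Bool) : ∃ i, (s i = false ∨ c ≤ i) := ⟨c, Or.inr le_rfl⟩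

/-- The value read from stream `s` with cap `c`: length of initial run of `true`s, capped at `c`. -/
def jval (c : ℕ) (s : ℕ → Bool) : ℕ := Nat.find (exP c s)

lemma jval_le (c : ℕ) (s : ℕ → Bool) : jval c s ≤ c := Nat.find_le (Or.inr le_rfl)

lemma jval_true {c : ℕ} {s : ℕ → Bool} {i : ℕ} (h : i < jval c s) : s i = true ∧ i < c := by
  have := Nat.find_min (exP c s) h
  push_neg at this
  exact ⟨by simpa using this.1, by omega⟩

lemma jval_spec (c : ℕ) (s : ℕ → Bool) : s (jval c s) = false ∨ c ≤ jval c s :=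
  Nat.find_spec (exP c s)

/-- Number of symbols consumed. -/
def clen (c : ℕ) (s : ℕ → Bool) : ℕ := min (jval c s + 1) c

lemma clen_pos {c : ℕ} (hc : 1 ≤ c) (s : ℕ → Bool) : 1 ≤ clen c s := le_min (by omega) hc

lemma clen_le (c : ℕ) (s : ℕ → Bool) : clen c s ≤ c := min_le_right _ _

lemma bit_eq {c : ℕ} {s : ℕ → Bool} {m : ℕ} (hm : m < clen c s) :
    s m = decide (m < jval c s) := by
  rcases lt_or_ge m (jval c s) with h | h
  · simp only [h, decide_true]
    exact (jval_true h).1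
  · have hm1 : m < jval c s + 1 := lt_of_lt_of_le hm (min_le_left _ _)
    have hmc : m < c := lt_of_lt_of_le hm (min_le_right _ _)
    have hmj : m = jval c s := by omega
    subst hmj
    rcases jval_spec c s with hf | hc'
    · simp [hf]
    · omega

lemma jval_congr {c : ℕ} {s t : ℕ → Bool} (h : ∀ i < c, s i = t i) : jval c s = jval c t := by
  have key : ∀ s t : ℕ → Bool, (∀ i < c, s i = t i) → jval c s ≤ jval c t := by
    intro s t h
    refine Nat.find_le ?_
    rcases jval_spec c t with hf | hc'
    · rcases lt_or_ge (jval c t) c with hlt | hge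
      · exact Or.inl ((h _ hlt).trans hf)
      · exact Or.inr hge
    · exact Or.inr hc'
  exact le_antisymm (key s t h) (key t s fun i hi => (h i hi).symm)

/-! ### iterated decoding -/

def shift (d : ℕ) (s : ℕ → Bool) : ℕ → Bool := fun m => s (m + d)

lemma shift_shift (a b : ℕ) (s : ℕ → Bool) : shift a (shift b s) = shift (b + a) s := by
  funext m; unfold shift; exact congrArg s (by omega)

variable (K : ℕ → ℕ)

/-- Stream remaining after reading `n` blocks. -/
def SS (x : ℕ → Bool) : ℕ → (ℕ → Bool)
  | 0 => x
  | n+1 => shift (clen (K n) (SS x n)) (SS x n)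

/-- Total number of symbols consumed by the first `n` blocks. -/
def off (x : ℕ → Bool) : ℕ → ℕ
  | 0 => 0
  | n+1 => off x n + clen (K n) (SS K x n)

lemma SS_eq_shift (x : ℕ → Bool) (n : ℕ) : SS K x n = shift (off K x n) x := by
  induction n with
  | zero =>
      funext m; show x m = x (m + 0); exact congrArg x (by omega)
  | succ n ih =>
      show shift (clen (K n) (SS K x n)) (SS K x n) =
        shift (off K x n + clen (K n) (SS K x n)) x
      rw [ih, shift_shift]

lemma off_le_sum (x : ℕ → Bool) (n : ℕ) : off K x n ≤ ∑ i ∈ Finset.range n, K i := by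
  induction n with
  | zero => simp [off]
  | succ n ih =>
      rw [Finset.sum_range_succ]
      exact add_le_add ih (clen_le _ _)

lemma off_ge (hK : ∀ n, 1 ≤ K n) (x : ℕ → Bool) (n : ℕ) : n ≤ off K x n := by
  induction n with
  | zero => simp [off]
  | succ n ih =>
      have := clen_pos (hK n) (SS K x n)
      show n + 1 ≤ off K x n + clen (K n) (SS K x n)
      omega

/-- bound for dependence -/
def bnd (n : ℕ) : ℕ := ∑ i ∈ Finset.range (n+1), K i

lemma dep (n : ℕ) : ∀ s t : ℕ → Bool, (∀ i < bnd K n, s i = t i) →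
    off K s n = off K t n ∧ jval (K n) (SS K s n) = jval (K n) (SS K t n) := by
  induction n with
  | zero =>
      intro s t h
      refine ⟨rfl, jval_congr fun i hi => h i ?_⟩
      simpa [bnd] using hi
  | succ n ih =>
      intro s t h
      have hmono : bnd K n ≤ bnd K (n+1) := by
        unfold bnd
        rw [Finset.sum_range_succ (n := n+1)]
        omega
      obtain ⟨hoff, hj⟩ := ih s t fun i hi => h i (lt_of_lt_of_le hi hmono)
      have hclen : clen (K n) (SS K s n) = clen (K n) (SS K t n) := by
        unfold clen; rw [hj]
      have hoff' : off K s (n+1) = off K t (n+1) := by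
        show off K s n + _ = off K t n + _
        rw [hoff, hclen]
      refine ⟨hoff', ?_⟩
      rw [SS_eq_shift, SS_eq_shift]
      refine jval_congr fun i hi => ?_
      show s (i + off K s (n+1)) = t (i + off K t (n+1))
      rw [← hoff']
      refine h _ ?_
      have h1 : off K s (n+1) ≤ ∑ j ∈ Finset.range (n+1), K j := off_le_sum K s (n+1)
      have h2 : bnd K (n+1) = ∑ j ∈ Finset.range (n+1), K j + K (n+1) := by
        unfold bnd; rw [Finset.sum_range_succ]
      omega

lemma continuous_of_depends {Y : Type*} [TopologicalSpace Y] (φ : (ℕ → Bool) → Y) (m : ℕ)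
    (h : ∀ s t : ℕ → Bool, (∀ i < m, s i = t i) → φ s = φ t) : Continuous φ := by
  classical
  have hφ : φ = (fun v : Fin m → Bool => φ (fun i => if hi : i < m then v ⟨i, hi⟩ else false)) ∘
      (fun s (i : Fin m) => s i) := by
    funext s
    refine h s _ fun i hi => ?_
    simp [hi]
  rw [hφ]
  exact continuous_of_discreteTopology.comp (continuous_pi fun i => continuous_apply _)

/-! ### the main theorem -/

theorem cantor_core (F : ℕ → Type v) [∀ n, TopologicalSpace (F n)] [∀ n, DiscreteTopology (F n)]
    [∀ n, Finite (F n)] [∀ n, Nontrivial (F n)] :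
    Nonempty ((∀ n, F n) ≃ₜ (ℕ → Bool)) := by
  classical
  have hk2 : ∀ n, 2 ≤ Nat.card (F n) := fun n =>
    Finite.one_lt_card_iff_nontrivial.mpr inferInstance
  set c : ℕ → ℕ := fun n => Nat.card (F n) - 1 with hcdef
  have hc1 : ∀ n, 1 ≤ c n := by
    intro n; have := hk2 n
    show 1 ≤ Nat.card (F n) - 1
    omega
  have hck : ∀ n, c n + 1 = Nat.card (F n) := by
    intro n; have := hk2 n
    show Nat.card (F n) - 1 + 1 = _
    omega
  have e : ∀ n, F n ≃ Fin (Nat.card (F n)) := fun n =>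
    Nat.equivFinOfCardPos (by have := hk2 n; omega)
  have hjlt : ∀ n (x : ℕ → Bool), jval (c n) (SS c x n) < Nat.card (F n) := by
    intro n x
    have h1 := jval_le (c n) (SS c x n)
    have h2 := hck n
    omega
  set dec : (ℕ → Bool) → ∀ n, F n := fun x n =>
    (e n).symm ⟨jval (c n) (SS c x n), hjlt n x⟩ with hdec
  have hcont : Continuous dec := by
    refine continuous_pi fun n => ?_
    refine continuous_of_depends _ (bnd c n) fun s t hst => ?_
    have hj := (dep c n s t hst).2
    show (e n).symm _ = (e n).symm _
    congr 1
    exact Fin.ext hj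
  have hinj : Function.Injective dec := by
    intro x y hxy
    have hj : ∀ n, jval (c n) (SS c x n) = jval (c n) (SS c y n) := by
      intro n
      have h1 := congrFun hxy n
      simp only [hdec] at h1
      have h2 := (e n).symm.injective h1
      exact Fin.mk.inj_iff.mp h2
    have key : ∀ n, off c x n = off c y n ∧ ∀ i < off c x n, x i = y i := by
      intro n
      induction n with
      | zero => exact ⟨rfl, fun i hi => absurd hi (by simp [off])⟩
      | succ n ih =>
          obtain ⟨ho, hb⟩ := ih
          have hclen : clen (c n) (SS c x n) = clen (c n) (SS c y n) := by
            unfold clen; rw [hj n]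
          have ho' : off c x (n+1) = off c y (n+1) := by
            show off c x n + _ = off c y n + _
            rw [ho, hclen]
          refine ⟨ho', fun i hi => ?_⟩
          rcases lt_or_ge i (off c x n) with h | h
          · exact hb i h
          · have hoffsucc : off c x (n+1) = off c x n + clen (c n) (SS c x n) := rfl
            have hlt : i - off c x n < clen (c n) (SS c x n) := by omega
            have hx : x i = SS c x n (i - off c x n) := by
              rw [SS_eq_shift]
              show x i = x ((i - off c x n) + off c x n)
              exact congrArg x (by omega)
            have hy : y i = SS c y n (i - off c y n) := by
              rw [SS_eq_shift]
              show y i = y ((i - off c y n) + off c y n)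
              exact congrArg y (by omega)
            rw [hx, hy, ← ho]
            rw [bit_eq hlt, bit_eq (hclen ▸ hlt : i - off c x n < clen (c n) (SS c y n))]
            rw [hj n]
    funext i
    refine (key (i+1)).2 i ?_
    exact lt_of_lt_of_le (Nat.lt_succ_self i) (off_ge c hc1 x (i+1))
  have hsurj : Function.Surjective dec := by
    intro f
    set j : ℕ → ℕ := fun n => ((e n) (f n) : Fin (Nat.card (F n))).val with hjdef
    have hjc : ∀ n, j n ≤ c n := by
      intro n
      have h1 : j n < Nat.card (F n) := ((e n) (f n)).isLt
      have h2 := hck n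
      omega
    set len : ℕ → ℕ := fun n => min (j n + 1) (c n) with hlendef
    have hlen1 : ∀ n, 1 ≤ len n := fun n => le_min (by omega) (hc1 n)
    set L : ℕ → ℕ := fun n => Nat.rec 0 (fun m a => a + len m) n with hLdef
    have hLsucc : ∀ n, L (n+1) = L n + len n := fun n => rfl
    have hLmono : Monotone L := monotone_nat_of_le_succ fun n => by
      rw [hLsucc]; exact Nat.le_add_right _ _
    have hLn : ∀ n, n ≤ L n := by
      intro n
      induction n with
      | zero => exact Nat.zero_le _
      | succ n ih =>
          have := hlen1 n
          rw [hLsucc]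
          omega
    set nn : ℕ → ℕ := fun i => Nat.findGreatest (fun m => L m ≤ i) i with hnndef
    set x : ℕ → Bool := fun i => decide (i - L (nn i) < j (nn i)) with hxdef
    have hnn_eq : ∀ n i, i < len n → nn (i + L n) = n := by
      intro n i hi
      have h1 : n ≤ nn (i + L n) :=
        Nat.le_findGreatest (le_trans (hLn n) (Nat.le_add_left _ _)) (Nat.le_add_left _ _)
      have h2 : nn (i + L n) ≤ n := by
        by_contra hgt
        push_neg at hgt
        have hP : L (nn (i + L n)) ≤ i + L n :=
          Nat.findGreatest_spec (P := fun m => L m ≤ i + L n) (m := n) (n := i + L n)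
            (le_trans (hLn n) (Nat.le_add_left (L n) i)) (Nat.le_add_left (L n) i)
        have h3 : L (n+1) ≤ L (nn (i + L n)) := hLmono hgt
        rw [hLsucc] at h3
        omega
      omega
    have hbit : ∀ n i, i < len n → x (i + L n) = decide (i < j n) := by
      intro n i hi
      show decide ((i + L n) - L (nn (i + L n)) < j (nn (i + L n))) = decide (i < j n)
      rw [hnn_eq n i hi]
      have h3 : (i + L n) - L n = i := by omega
      rw [h3]
    have hjval : ∀ n, jval (c n) (shift (L n) x) = j n := by
      intro n
      apply le_antisymm
      · refine Nat.find_le ?_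
        rcases lt_or_ge (j n) (c n) with hlt | hge
        · left
          have hjlen : j n < len n := by
            have : len n = j n + 1 := min_eq_left (by omega)
            omega
          have := hbit n (j n) hjlen
          show x (j n + L n) = false
          rw [this]
          simp
        · right
          exact le_trans hge le_rfl
      · show j n ≤ Nat.find (exP (c n) (shift (L n) x))
        rw [Nat.le_find_iff]
        intro m hm
        have hmlen : m < len n := by
          have h1 := hjc n
          have : j n ≤ len n := le_min (by omega) (by omega)
          omega
        refine not_or.mpr ⟨?_, ?_⟩
        · show ¬ x (m + L n) = false
          rw [hbit n m hmlen]
          simp [hm]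
        · have := hjc n
          omega
    have main : ∀ n, SS c x n = shift (L n) x := by
      intro n
      induction n with
      | zero =>
          funext m; rfl
      | succ n ih =>
          show shift (clen (c n) (SS c x n)) (SS c x n) = shift (L (n+1)) x
          rw [ih]
          have : clen (c n) (shift (L n) x) = len n := by
            unfold clen
            rw [hjval n]
          rw [this, shift_shift, ← hLsucc]
    refine ⟨x, ?_⟩
    funext n
    show (e n).symm ⟨jval (c n) (SS c x n), hjlt n x⟩ = f n
    have : (⟨jval (c n) (SS c x n), hjlt n x⟩ : Fin (Nat.card (F n))) = (e n) (f n) := by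
      refine Fin.ext ?_
      show jval (c n) (SS c x n) = j n
      rw [main n, hjval n]
    rw [this, Equiv.symm_apply_apply]
  exact ⟨(Continuous.homeoOfEquivCompactToT2
    (f := Equiv.ofBijective dec ⟨hinj, hsurj⟩) hcont).symm⟩

end Cantor

def curryHomeo {α : Type*} {β : Type*} (Y : α × β → Type*) [∀ p, TopologicalSpace (Y p)] :
    (∀ p, Y p) ≃ₜ ∀ a, ∀ b, Y (a, b) where
  toFun f a b := f (a, b)
  invFun g p := g p.1 p.2
  left_inv f := rfl
  right_inv g := rfl
  continuous_toFun := by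
    refine continuous_pi fun a => continuous_pi fun b => continuous_apply _
  continuous_invFun := by
    exact continuous_pi fun p => (continuous_apply p.2).comp (continuous_apply p.1)

theorem step2 (I : Type u) (D : I → Type u) [∀ i, TopologicalSpace (D i)]
    [∀ i, DiscreteTopology (D i)] [∀ i, Finite (D i)] [∀ i, Nontrivial (D i)] [Infinite I] :
    Nonempty ((∀ i, D i) ≃ₜ (I → Bool)) := by
  have hmk : Cardinal.mk (I × ℕ) = Cardinal.mk I := by
    rw [Cardinal.mk_prod, Cardinal.mk_nat, Cardinal.lift_aleph0, Cardinal.lift_uzero]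
    exact Cardinal.mul_aleph0_eq (Cardinal.aleph0_le_mk I)
  obtain ⟨e⟩ := Cardinal.eq.mp hmk
  have cb : ∀ a : I, (∀ b : ℕ, D (e (a, b))) ≃ₜ (ℕ → Bool) :=
    fun a => (Cantor.cantor_core (fun b => D (e (a, b)))).some
  exact ⟨(Homeomorph.piCongrLeft (Y := D) e).symm.trans <|
    (curryHomeo (fun p => D (e p))).trans <|
    (Homeomorph.piCongrRight cb).trans <|
    (curryHomeo fun _ : I × ℕ => Bool).symm.trans
    (Homeomorph.piCongrLeft (Y := fun _ : I => Bool) e)⟩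


noncomputable def pruneHomeo {ι : Type*} (D : ι → Type*) [∀ i, TopologicalSpace (D i)]
    (ne : ∀ i, Nonempty (D i)) :
    (∀ i, D i) ≃ₜ (∀ j : {i // Nontrivial (D i)}, D j) :=
  letI : ∀ i, Decidable (Nontrivial (D i)) := fun i => Classical.propDecidable _
  { toFun := fun f j => f j
    invFun := fun f i => if h : Nontrivial (D i) then f ⟨i, h⟩ else (ne i).some
    left_inv := by
      intro f
      funext i
      by_cases h : Nontrivial (D i)
      · simp [h]
      · have : Subsingleton (D i) := not_nontrivial_iff_subsingleton.mp h
        exact Subsingleton.elim _ _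
    right_inv := by
      intro f
      funext j
      obtain ⟨i, h⟩ := j
      simp [h]
    continuous_toFun := continuous_pi fun j => continuous_apply _
    continuous_invFun := by
      refine continuous_pi fun i => ?_
      by_cases h : Nontrivial (D i)
      · simpa [h] using continuous_apply (⟨i, h⟩ : {i // Nontrivial (D i)})
      · simpa [h] using (continuous_const :
          Continuous fun _ : ∀ j : {i // Nontrivial (D i)}, D j => (ne i).some) }

theorem topWeight_le_of_homeomorph {X : Type u} {Y : Type u} [TopologicalSpace X]
    [TopologicalSpace Y] (h : X ≃ₜ Y) : topWeight X ≤ topWeight Y := by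
  have hne : { c : Cardinal.{u} |
      ∃ B : Set (Set Y), TopologicalSpace.IsTopologicalBasis B ∧ Cardinal.mk B = c }.Nonempty :=
    ⟨_, ⟨{ s : Set Y | IsOpen s }, isTopologicalBasis_opens, rfl⟩⟩
  obtain ⟨B, hB, hBc⟩ := csInf_mem hne
  have hB' : TopologicalSpace.IsTopologicalBasis ((Set.preimage h) '' B) :=
    hB.isInducing h.isInducing
  refine le_trans (csInf_le' ⟨_, hB', rfl⟩) ?_
  exact le_trans Cardinal.mk_image_le (le_of_eq hBc)

theorem topWeight_pi_bool_le (I : Type u) [Infinite I] :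
    topWeight (I → Bool) ≤ Cardinal.mk I := by
  classical
  set f : (Σ t : Finset I, (↥t → Bool)) → Set (I → Bool) :=
    fun p => { x | ∀ (i : I) (h : i ∈ p.1), x i = p.2 ⟨i, h⟩ } with hf
  have hbasis : TopologicalSpace.IsTopologicalBasis (Set.range f) := by
    refine TopologicalSpace.isTopologicalBasis_of_isOpen_of_nhds ?_ ?_
    · rintro u ⟨⟨t, v⟩, rfl⟩
      have : f ⟨t, v⟩ = ⋂ i : ↥t, (fun x : I → Bool => x (i : I)) ⁻¹' {v i} := by
        ext x
        simp only [hf, Set.mem_setOf_eq, Set.mem_iInter, Set.mem_preimage, Set.mem_singleton_iff,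
          Subtype.forall]
      rw [this]
      exact isOpen_iInter_of_finite fun i =>
        (continuous_apply (i : I)).isOpen_preimage _ (isOpen_discrete _)
    · intro a u hau hu
      obtain ⟨t, w, hw, hsub⟩ := (isOpen_pi_iff.mp hu) a hau
      refine ⟨f ⟨t, fun i => a i⟩, ⟨⟨t, fun i => a i⟩, rfl⟩, by simp [hf], ?_⟩
      intro x hx
      refine hsub ?_
      intro i hi
      rw [Set.mem_setOf_eq] at hx
      rw [hx i hi]
      exact (hw i hi).2
  refine le_trans (csInf_le' ⟨_, hbasis, rfl⟩) ?_
  refine le_trans Cardinal.mk_range_le ?_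
  have : Cardinal.mk (Σ t : Finset I, (↥t → Bool)) ≤ Cardinal.mk (Finset I) * Cardinal.aleph0 := by
    rw [← Cardinal.sum_const']
    rw [Cardinal.mk_sigma]
    refine Cardinal.sum_le_sum _ _ fun t => ?_
    exact le_of_lt (Cardinal.lt_aleph0_of_finite _)
  refine le_trans this ?_
  rw [Cardinal.mk_finset_of_infinite]
  exact le_of_eq (Cardinal.mul_aleph0_eq (Cardinal.aleph0_le_mk I))

section Grp
variable {G : Type u} [Group G] [TopologicalSpace G] [IsTopologicalGroup G]
  [CompactSpace G] [T2Space G] [TotallyDisconnectedSpace G]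

lemma exists_ONS_sub {U : Set G} (hU : IsOpen U) (h1 : (1:G) ∈ U) :
    ∃ H : OpenNormalSubgroup G, (H : Set G) ⊆ U := by
  obtain ⟨V, hV, h1V, hVU⟩ := compact_exists_isClopen_in_isOpen hU h1
  obtain ⟨H, hH⟩ := IsTopologicalGroup.exist_openNormalSubgroup_sub_clopen_nhds_of_one hV h1V
  exact ⟨H, hH.trans hVU⟩

lemma continuous_of_mod {X : Type v} [TopologicalSpace X] (f : X → G)
    (h : ∀ H : OpenNormalSubgroup G, ∀ x : X, ∀ᶠ y in nhds x, (f x)⁻¹ * f y ∈ H.toSubgroup) :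
    Continuous f := by
  rw [continuous_iff_continuousAt]
  intro x V hV
  rw [Filter.mem_map]
  have h2 : (fun g => f x * g) ⁻¹' V ∈ nhds (1 : G) := by
    have := (Homeomorph.mulLeft (f x)).continuous.continuousAt (x := (1:G))
    apply this
    simpa using hV
  obtain ⟨U, hUsub, hUopen, hU1⟩ := mem_nhds_iff.mp h2
  obtain ⟨H, hH⟩ := exists_ONS_sub hUopen hU1
  filter_upwards [h H x] with y hy
  have : f x * ((f x)⁻¹ * f y) ∈ V := hUsub (hH hy)
  simpa using this

lemma chain3 {S : Subgroup G} {x y z : G} (h1 : x⁻¹ * y ∈ S) (h2 : y⁻¹ * z ∈ S) :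
    x⁻¹ * z ∈ S := by
  have h3 := S.mul_mem h1 h2
  have : (x⁻¹ * y) * (y⁻¹ * z) = x⁻¹ * z := by group
  rwa [this] at h3

lemma symm_mem {S : Subgroup G} {x y : G} (h : x⁻¹ * y ∈ S) : y⁻¹ * x ∈ S := by
  have := S.inv_mem h
  have h2 : (x⁻¹ * y)⁻¹ = y⁻¹ * x := by group
  rwa [h2] at this

/-- A partial continuous selection at level `K`. -/
structure PS (G : Type u) [Group G] [TopologicalSpace G] (M : Subgroup G) where
  K : Subgroup G
  normal : K.Normal
  closed : IsClosed (K : Set G)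
  le : K ≤ M
  f : G → G
  sel : ∀ g, g⁻¹ * f g ∈ M
  inv : ∀ g h, g⁻¹ * h ∈ M → f g = f h
  cont : ∀ O : OpenNormalSubgroup G, K ≤ O.toSubgroup →
    ∀ x : G, ∀ᶠ y in nhds x, (f x)⁻¹ * f y ∈ O.toSubgroup

variable (M : Subgroup G)

def PSle (P Q : PS G M) : Prop :=
  Q.K ≤ P.K ∧ ∀ g, (P.f g)⁻¹ * Q.f g ∈ P.K

lemma PSle_trans : Transitive (PSle (G := G) M) := by
  rintro P Q R ⟨h1, h2⟩ ⟨h3, h4⟩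
  exact ⟨h3.trans h1, fun g => chain3 (h2 g) (h1 (h4 g))⟩

/-- The base element: level M. -/
noncomputable def PSbase (hMn : M.Normal) (hMc : IsClosed (M : Set G)) : PS G M where
  K := M
  normal := hMn
  closed := hMc
  le := le_rfl
  f := fun g => (QuotientGroup.mk (s := M) g).out
  sel := fun g => QuotientGroup.eq.mp (QuotientGroup.out_eq' (QuotientGroup.mk (s := M) g)).symm
  inv := fun g h hgh =>
    congrArg Quotient.out (QuotientGroup.eq.mpr hgh : (QuotientGroup.mk (s := M) g) = _)
  cont := by
    intro O hMO x
    have hUopen : IsOpen {y : G | x⁻¹ * y ∈ O.toSubgroup} :=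
      (O.toOpenSubgroup.isOpen).preimage (continuous_const.mul continuous_id)
    have hx : x ∈ {y : G | x⁻¹ * y ∈ O.toSubgroup} := by
      simp only [Set.mem_setOf_eq, inv_mul_cancel]
      exact one_mem _
    filter_upwards [hUopen.mem_nhds hx] with y hy
    have s1 : (QuotientGroup.mk (s := M) x).out⁻¹ * x ∈ O.toSubgroup :=
      symm_mem (hMO (QuotientGroup.eq.mp (QuotientGroup.out_eq' _).symm))
    have s2 : y⁻¹ * (QuotientGroup.mk (s := M) y).out ∈ O.toSubgroup :=
      hMO (QuotientGroup.eq.mp (QuotientGroup.out_eq' _).symm)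
    exact chain3 (chain3 s1 hy) s2

/-- upper bounds for chains -/
lemma PS_chain_ub (hMn : M.Normal) (hMc : IsClosed (M : Set G)) (c : Set (PS G M))
    (hc : IsChain (PSle M) c) : ∃ ub, ∀ P ∈ c, PSle M P ub := by
  classical
  rcases Set.eq_empty_or_nonempty c with rfl | ⟨P₀, hP₀⟩
  · exact ⟨PSbase M hMn hMc, fun P hP => absurd hP (Set.notMem_empty P)⟩
  -- the coset of P.K selected by P at g
  set coset : PS G M → G → Set G := fun P g => {y | (P.f g)⁻¹ * y ∈ P.K} with hcoset
  have hc_closed : ∀ P g, IsClosed (coset P g) := fun P g =>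
    P.closed.preimage (continuous_const.mul continuous_id)
  have hc_ne : ∀ P g, (coset P g).Nonempty := fun P g =>
    ⟨P.f g, by simp only [hcoset, Set.mem_setOf_eq, inv_mul_cancel]; exact one_mem _⟩
  have hc_sub : ∀ P Q : PS G M, PSle M P Q → ∀ g, coset Q g ⊆ coset P g := by
    intro P Q hPQ g y hy
    exact chain3 (hPQ.2 g) (hPQ.1 hy)
  have hdir : ∀ g, Directed (· ⊇ ·) (fun P : c => coset P.1 g) := by
    intro g P Q
    rcases eq_or_ne P Q with rfl | h
    · exact ⟨P, Set.Subset.rfl, Set.Subset.rfl⟩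
    rcases hc P.2 Q.2 (fun e => h (Subtype.ext e)) with hPQ | hQP
    · exact ⟨Q, hc_sub _ _ hPQ g, Set.Subset.rfl⟩
    · exact ⟨P, Set.Subset.rfl, hc_sub _ _ hQP g⟩
  haveI : Nonempty c := ⟨⟨P₀, hP₀⟩⟩
  set S : G → Set G := fun g => ⋂ P : c, coset P.1 g with hS
  have hSne : ∀ g, (S g).Nonempty := by
    intro g
    exact IsCompact.nonempty_iInter_of_directed_nonempty_isCompact_isClosed _
      (hdir g) (fun P => hc_ne _ g) (fun P => (hc_closed _ g).isCompact)
      (fun P => hc_closed _ g)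
  have hSinv : ∀ g h : G, g⁻¹ * h ∈ M → S g = S h := by
    intro g h hgh
    have : ∀ P : c, coset P.1 g = coset P.1 h := fun P => by
      simp only [hcoset]; rw [P.1.inv g h hgh]
    simp only [hS]
    exact Set.iInter_congr this
  -- the new selection function
  set F : G ⧸ M → G := fun q => (hSne q.out).some with hF
  set f : G → G := fun g => F (QuotientGroup.mk (s := M) g) with hf
  have hfS : ∀ g, f g ∈ S g := by
    intro g
    have h1 : (QuotientGroup.mk (s := M) g).out⁻¹ * g ∈ M := by
      refine symm_mem ?_
      exact QuotientGroup.eq.mp (QuotientGroup.out_eq' _).symm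
    have h2 := (hSne (QuotientGroup.mk (s := M) g).out).some_mem
    exact (hSinv _ _ h1).le h2
  have hfK : ∀ (P : c) (g : G), (P.1.f g)⁻¹ * f g ∈ P.1.K := by
    intro P g
    have := hfS g
    rw [hS] at this
    exact Set.mem_iInter.mp this P
  -- K∞
  set Kb : Subgroup G := ⨅ P : c, P.1.K with hKb
  have hKbmem : ∀ {x : G}, x ∈ Kb ↔ ∀ P : c, x ∈ P.1.K := fun {x} => Subgroup.mem_iInf
  have hKbnormal : Kb.Normal := by
    constructor
    intro n hn g
    rw [hKbmem] at hn ⊢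
    exact fun P => (P.1.normal).conj_mem n (hn P) g
  have hKbclosed : IsClosed (Kb : Set G) := by
    have : (Kb : Set G) = ⋂ P : c, (P.1.K : Set G) := Subgroup.coe_iInf
    rw [this]
    exact isClosed_iInter fun P => P.1.closed
  -- finding a member of the chain below an open normal subgroup
  have hfind : ∀ O : OpenNormalSubgroup G, Kb ≤ O.toSubgroup → ∃ P : c, P.1.K ≤ O.toSubgroup := by
    intro O hO
    by_contra hnone
    push_neg at hnone
    have hne : ∀ P : c, ((P.1.K : Set G) ∩ (O : Set G)ᶜ).Nonempty := by
      intro P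
      obtain ⟨x, hx1, hx2⟩ := SetLike.not_le_iff_exists.mp (hnone P)
      exact ⟨x, hx1, hx2⟩
    have hdir2 : Directed (· ⊇ ·) (fun P : c => (P.1.K : Set G) ∩ (O : Set G)ᶜ) := by
      intro P Q
      rcases eq_or_ne P Q with rfl | h
      · exact ⟨P, Set.Subset.rfl, Set.Subset.rfl⟩
      rcases hc P.2 Q.2 (fun e => h (Subtype.ext e)) with hPQ | hQP
      · exact ⟨Q, Set.inter_subset_inter_left _ hPQ.1, Set.Subset.rfl⟩
      · exact ⟨P, Set.Subset.rfl, Set.inter_subset_inter_left _ hQP.1⟩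
    have hcl : ∀ P : c, IsClosed ((P.1.K : Set G) ∩ (O : Set G)ᶜ) := fun P =>
      P.1.closed.inter (isClosed_compl_iff.mpr O.toOpenSubgroup.isOpen)
    obtain ⟨x, hx⟩ := IsCompact.nonempty_iInter_of_directed_nonempty_isCompact_isClosed _
      hdir2 hne (fun P => (hcl P).isCompact) hcl
    have hx1 : x ∈ Kb := hKbmem.mpr fun P => (Set.mem_iInter.mp hx P).1
    exact (Set.mem_iInter.mp hx ⟨P₀, hP₀⟩).2 (hO hx1)
  refine ⟨{ K := Kb
            normal := hKbnormal
            closed := hKbclosed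
            le := le_trans (iInf_le _ ⟨P₀, hP₀⟩) P₀.le
            f := f
            sel := fun g => chain3 (P₀.sel g) (P₀.le (hfK ⟨P₀, hP₀⟩ g))
            inv := fun g h hgh => by
              simp only [hf]
              rw [QuotientGroup.eq.mpr hgh]
            cont := ?_ }, ?_⟩
  · intro O hO x
    obtain ⟨P, hP⟩ := hfind O hO
    filter_upwards [P.1.cont O hP x] with y hy
    have a1 : (f x)⁻¹ * P.1.f x ∈ O.toSubgroup := symm_mem (hP (hfK P x))
    have a3 : (P.1.f y)⁻¹ * f y ∈ O.toSubgroup := hP (hfK P y)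
    exact chain3 (chain3 a1 hy) a3
  · intro P hP
    exact ⟨iInf_le (fun P : c => P.1.K) ⟨P, hP⟩, fun g => hfK ⟨P, hP⟩ g⟩

/-- The successor step: a maximal element has trivial level. -/
lemma PS_max_bot (P : PS G M) (hmax : ∀ Q, PSle M P Q → PSle M Q P) : P.K = ⊥ := by
  classical
  by_contra hne
  -- get a nontrivial element of K
  rw [Subgroup.eq_bot_iff_forall] at hne
  push_neg at hne
  obtain ⟨x₀, hx₀K, hx₀ne⟩ := hne
  -- O₀ open normal not containing x₀
  obtain ⟨O₀, hO₀⟩ := exists_ONS_sub (isOpen_compl_singleton (x := x₀))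
    (by simp [Ne.symm hx₀ne])
  have hx₀O₀ : x₀ ∉ O₀.toSubgroup := fun h => (hO₀ h) rfl
  -- W open normal with W ∩ K ≤ O₀
  have hKO₀closed : IsClosed ((P.K : Set G) ∩ (O₀ : Set G)ᶜ) :=
    P.closed.inter (isClosed_compl_iff.mpr O₀.toOpenSubgroup.isOpen)
  have h1mem : (1 : G) ∈ ((P.K : Set G) ∩ (O₀ : Set G)ᶜ)ᶜ := by
    intro h
    exact h.2 (one_mem O₀.toSubgroup)
  obtain ⟨W, hW⟩ := exists_ONS_sub (isOpen_compl_iff.mpr hKO₀closed) h1mem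
  have hWK : ∀ w : G, w ∈ W.toSubgroup → w ∈ P.K → w ∈ O₀.toSubgroup := by
    intro w hw hwK
    by_contra hwO
    exact (hW hw) ⟨hwK, hwO⟩
  -- the subgroup K ⊔ W
  set KW : Subgroup G := P.K ⊔ W.toSubgroup with hKW
  haveI hKn : P.K.Normal := P.normal
  haveI hWn : W.toSubgroup.Normal := W.isNormal'
  haveI hKWn : KW.Normal := Subgroup.sup_normal _ _
  have hKWopen : IsOpen (KW : Set G) :=
    Subgroup.isOpen_mono (le_sup_right : W.toSubgroup ≤ KW) W.toOpenSubgroup.isOpen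
  have hKWmul : (KW : Set G) = (P.K : Set G) * (W.toSubgroup : Set G) := by
    rw [hKW, Subgroup.mul_normal]
  -- coset representatives mod KW
  set cw : G → G := fun x => (QuotientGroup.mk (s := KW) x).out with hcw
  have hcw_mem : ∀ x, x⁻¹ * cw x ∈ KW := fun x =>
    QuotientGroup.eq.mp (QuotientGroup.out_eq' _).symm
  have hcw_inv : ∀ x y, x⁻¹ * y ∈ KW → cw x = cw y := by
    intro x y hxy
    simp only [hcw]
    rw [QuotientGroup.eq.mpr hxy]
  -- the target sets
  set T : G → Set G := fun x => {y | x⁻¹ * y ∈ P.K ∧ (cw x)⁻¹ * y ∈ W.toSubgroup} with hT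
  have hTne : ∀ x, (T x).Nonempty := by
    intro x
    have := hcw_mem x
    rw [← SetLike.mem_coe, hKWmul] at this
    obtain ⟨k, hk, w, hw, hkw⟩ := this
    refine ⟨x * k, by simpa using hk, ?_⟩
    have hkw' : k * w = x⁻¹ * cw x := hkw
    have hcwx : cw x = x * (k * w) := by rw [hkw']; group
    rw [hcwx]
    have : (x * (k * w))⁻¹ * (x * k) = w⁻¹ := by group
    rw [this]
    exact W.toSubgroup.inv_mem hw
  -- the new selection
  set f' : G → G := fun g => (hTne (P.f g)).some with hf'
  have hf'T : ∀ g, f' g ∈ T (P.f g) := fun g => (hTne (P.f g)).some_mem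
  have hf'K : ∀ g, (P.f g)⁻¹ * f' g ∈ P.K := fun g => (hf'T g).1
  have hf'W : ∀ g, (cw (P.f g))⁻¹ * f' g ∈ W.toSubgroup := fun g => (hf'T g).2
  -- K' = K ⊓ O₀
  set K' : Subgroup G := P.K ⊓ O₀.toSubgroup with hK'
  haveI hO₀n : O₀.toSubgroup.Normal := O₀.isNormal'
  have hK'normal : K'.Normal := by
    constructor
    intro n hn g
    exact ⟨hKn.conj_mem n hn.1 g, hO₀n.conj_mem n hn.2 g⟩
  have hK'closed : IsClosed (K' : Set G) := by
    have : (K' : Set G) = (P.K : Set G) ∩ (O₀.toSubgroup : Set G) := rfl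
    rw [this]
    exact P.closed.inter O₀.toOpenSubgroup.isClosed
  -- continuity of f'
  have hf'cont : ∀ O : OpenNormalSubgroup G, K' ≤ O.toSubgroup →
      ∀ x : G, ∀ᶠ y in nhds x, (f' x)⁻¹ * f' y ∈ O.toSubgroup := by
    intro O hO x
    set V : OpenNormalSubgroup G := W ⊓ O with hV
    have hVW : V.toSubgroup ≤ W.toSubgroup := inf_le_left
    have hVO : V.toSubgroup ≤ O.toSubgroup := inf_le_right
    haveI hVn : V.toSubgroup.Normal := V.isNormal'
    set O' : Subgroup G := P.K ⊔ V.toSubgroup with hO'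
    haveI hO'n : O'.Normal := Subgroup.sup_normal _ _
    have hO'open : IsOpen (O' : Set G) :=
      Subgroup.isOpen_mono (le_sup_right : V.toSubgroup ≤ O') V.toOpenSubgroup.isOpen
    have hO'mul : (O' : Set G) = (P.K : Set G) * (V.toSubgroup : Set G) := by
      rw [hO', Subgroup.mul_normal]
    set O'' : OpenNormalSubgroup G := ⟨⟨O', hO'open⟩, hO'n⟩ with hO''
    set KW' : OpenNormalSubgroup G := ⟨⟨KW, hKWopen⟩, hKWn⟩ with hKW'
    filter_upwards [P.cont O'' le_sup_left x, P.cont KW' le_sup_left x] with y h1 h2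
    -- names
    have hcwxy : cw (P.f x) = cw (P.f y) := hcw_inv _ _ h2
    -- z := (f' x)⁻¹ * f' y ∈ W
    have hzW : (f' x)⁻¹ * f' y ∈ W.toSubgroup := by
      have b1 : (f' x)⁻¹ * cw (P.f x) ∈ W.toSubgroup := symm_mem (hf'W x)
      have b2 : (cw (P.f x))⁻¹ * f' y ∈ W.toSubgroup := by
        rw [hcwxy]; exact hf'W y
      exact chain3 b1 b2
    -- decomposition  P.f y = P.f x * (k₁ * u)
    have h1' : (P.f x)⁻¹ * P.f y ∈ O' := h1
    rw [← SetLike.mem_coe, hO'mul] at h1'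
    obtain ⟨k₁, hk₁, u, hu, hk₁u⟩ := h1'
    -- a := (P.f x)⁻¹ * f' x ∈ K ; a' := (P.f y)⁻¹ * f' y ∈ K
    have ha : (P.f x)⁻¹ * f' x ∈ P.K := hf'K x
    have ha' : (P.f y)⁻¹ * f' y ∈ P.K := hf'K y
    -- z = a⁻¹ * (k₁ * u) * a'
    have hz_eq : (f' x)⁻¹ * f' y =
        ((P.f x)⁻¹ * f' x)⁻¹ * ((P.f x)⁻¹ * P.f y) * ((P.f y)⁻¹ * f' y) := by group
    -- u' := (a⁻¹ k₁) u (a⁻¹ k₁)⁻¹ ∈ V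
    set a : G := (P.f x)⁻¹ * f' x with hadef
    set a' : G := (P.f y)⁻¹ * f' y with ha'def
    set t : G := a⁻¹ * k₁ with htdef
    have hu' : t * u * t⁻¹ ∈ V.toSubgroup := hVn.conj_mem u hu t
    have hkbar : t * a' ∈ P.K := P.K.mul_mem (P.K.mul_mem (P.K.inv_mem ha) hk₁) ha'
    -- z = u' * (t * a')
    have hz_eq2 : (f' x)⁻¹ * f' y = (t * u * t⁻¹) * (t * a') := by
      rw [hz_eq, ← hk₁u, htdef, hadef, ha'def]
      group
    -- t * a' ∈ W
    have hta'W : t * a' ∈ W.toSubgroup := by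
      have : t * a' = (t * u * t⁻¹)⁻¹ * ((f' x)⁻¹ * f' y) := by
        rw [hz_eq2]; group
      rw [this]
      exact W.toSubgroup.mul_mem (W.toSubgroup.inv_mem (hVW hu')) hzW
    have hta'O : t * a' ∈ O.toSubgroup := hO ⟨hkbar, hWK _ hta'W hkbar⟩
    rw [hz_eq2]
    exact O.toSubgroup.mul_mem (hVO hu') hta'O
  -- the new partial selection
  set P' : PS G M := { K := K'
                       normal := hK'normal
                       closed := hK'closed
                       le := le_trans inf_le_left P.le
                       f := f'
                       sel := fun g => chain3 (P.sel g) (P.le (hf'K g))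
                       inv := fun g h hgh => by simp only [hf']; rw [P.inv g h hgh]
                       cont := hf'cont } with hP'
  have hle : PSle M P P' := ⟨inf_le_left, hf'K⟩
  have hge := hmax P' hle
  have : P.K ≤ K' := hge.1
  exact hx₀O₀ (this hx₀K).2

/-- Continuous choice of representatives for cosets of a closed normal subgroup. -/
theorem exists_section (hMn : M.Normal) (hMc : IsClosed (M : Set G)) :
    ∃ r : G → G, Continuous r ∧ (∀ g, g⁻¹ * r g ∈ M) ∧ ∀ g h : G, g⁻¹ * h ∈ M → r g = r h := by
  obtain ⟨P, hPmax⟩ := exists_maximal_of_chains_bounded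
    (PS_chain_ub M hMn hMc) (fun h1 h2 => PSle_trans M h1 h2)
  have hbot := PS_max_bot M P hPmax
  refine ⟨P.f, ?_, P.sel, P.inv⟩
  apply continuous_of_mod
  intro H x
  exact P.cont H (by rw [hbot]; exact bot_le) x

theorem step1 (G : Type u) [Group G] [TopologicalSpace G] [IsTopologicalGroup G]
    [CompactSpace G] [T2Space G] [TotallyDisconnectedSpace G] :
    ∃ (I : Type u) (D : I → Type u) (_ : ∀ i, TopologicalSpace (D i)),
      (∀ i, DiscreteTopology (D i)) ∧ (∀ i, Finite (D i)) ∧ (∀ i, Nontrivial (D i)) ∧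
      Nonempty (G ≃ₜ ∀ i, D i) ∧ Cardinal.mk I ≤ topWeight G := by
  classical
  -- a basis realizing the weight
  have hne : { c : Cardinal.{u} |
      ∃ B : Set (Set G), TopologicalSpace.IsTopologicalBasis B ∧ Cardinal.mk B = c }.Nonempty :=
    ⟨_, ⟨{ s : Set G | IsOpen s }, isTopologicalBasis_opens, rfl⟩⟩
  obtain ⟨B, hB, hBc⟩ := csInf_mem hne
  set ι := (Cardinal.mk ↥B).ord.ToType with hι
  have hmkι : Cardinal.mk ι = Cardinal.mk ↥B := by
    rw [hι, Cardinal.mk_toType, Cardinal.card_ord]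
  obtain ⟨eB⟩ : Nonempty (ι ≃ ↥B) := Cardinal.eq.mp hmkι
  -- open normal subgroups from the basis
  have hNex : ∀ i : ι, ∃ H : OpenNormalSubgroup G,
      (1:G) ∈ ((eB i : Set G)) → (H : Set G) ⊆ ((eB i : Set G)) := by
    intro i
    by_cases h1 : (1:G) ∈ ((eB i : Set G))
    · obtain ⟨H, hH⟩ := exists_ONS_sub (hB.isOpen (eB i).2) h1
      exact ⟨H, fun _ => hH⟩
    · exact ⟨⟨⟨⊤, isOpen_univ⟩, inferInstanceAs (⊤ : Subgroup G).Normal⟩,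
        fun h => absurd h h1⟩
  set N : ι → OpenNormalSubgroup G := fun i => (hNex i).choose with hN
  have hNsub : ∀ i : ι, (1:G) ∈ ((eB i : Set G)) →
      ((N i : Subgroup G) : Set G) ⊆ ((eB i : Set G)) :=
    fun i => (hNex i).choose_spec
  have hNtriv : ∀ g : G, (∀ i, g ∈ (N i).toSubgroup) → g = 1 := by
    intro g hg
    by_contra hne1
    obtain ⟨H, hH⟩ := exists_ONS_sub (isOpen_compl_singleton (x := g))
      (by simpa using Ne.symm hne1)
    obtain ⟨b, hbB, hb1, hbH⟩ := hB.exists_subset_of_mem_open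
      (show (1:G) ∈ ((H : Subgroup G) : Set G) from one_mem _) H.toOpenSubgroup.isOpen
    set i : ι := eB.symm ⟨b, hbB⟩ with hidef
    have hei : (eB i : Set G) = b := by rw [hidef, Equiv.apply_symm_apply]
    have hsub := hNsub i (by rw [hei]; exact hb1)
    rw [hei] at hsub
    have : g ∈ ({g}ᶜ : Set G) := hH (hbH (hsub (hg i)))
    exact this rfl
  -- the filtration
  set Msub : ι → Subgroup G := fun i => ⨅ j : ι, ⨅ (_ : j < i), (N j).toSubgroup with hMsub
  have hMmem : ∀ (i : ι) (g : G), g ∈ Msub i ↔ ∀ j < i, g ∈ (N j).toSubgroup := by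
    intro i g
    simp [hMsub, Subgroup.mem_iInf]
  have hMleN : ∀ {j i : ι}, j < i → Msub i ≤ (N j).toSubgroup := by
    intro j i hji g hg
    exact (hMmem i g).mp hg j hji
  have hManti : ∀ {i j : ι}, i ≤ j → Msub j ≤ Msub i := by
    intro i j hij g hg
    rw [hMmem]
    intro l hl
    exact (hMmem j g).mp hg l (lt_of_lt_of_le hl hij)
  have hMnormal : ∀ i, (Msub i).Normal := by
    intro i
    constructor
    intro n hn g
    rw [hMmem] at hn ⊢
    exact fun j hj => (N j).isNormal'.conj_mem n (hn j hj) g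
  have hMclosed : ∀ i, IsClosed ((Msub i : Subgroup G) : Set G) := by
    intro i
    have : ((Msub i : Subgroup G) : Set G) =
        ⋂ j : ι, ⋂ (_ : j < i), (((N j) : Subgroup G) : Set G) := by
      simp [hMsub, Subgroup.coe_iInf]
    rw [this]
    exact isClosed_iInter fun j => isClosed_iInter fun _ => (N j).toOpenSubgroup.isClosed
  -- continuous sections
  have hsec : ∀ i : ι, ∃ r : G → G, Continuous r ∧ (∀ g, g⁻¹ * r g ∈ Msub i) ∧
      ∀ g h : G, g⁻¹ * h ∈ Msub i → r g = r h :=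
    fun i => exists_section _ (hMnormal i) (hMclosed i)
  set r : ι → G → G := fun i => (hsec i).choose with hr
  have rcont : ∀ i, Continuous (r i) := fun i => (hsec i).choose_spec.1
  have rsel : ∀ i g, g⁻¹ * r i g ∈ Msub i := fun i => (hsec i).choose_spec.2.1
  have rinv : ∀ i (g h : G), g⁻¹ * h ∈ Msub i → r i g = r i h :=
    fun i => (hsec i).choose_spec.2.2
  -- instances on the quotients
  haveI hqd : ∀ i : ι, DiscreteTopology (G ⧸ (N i).toSubgroup) :=
    fun i => QuotientGroup.discreteTopology (N i).toOpenSubgroup.isOpen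
  haveI hqf : ∀ i : ι, Finite (G ⧸ (N i).toSubgroup) :=
    fun i => Subgroup.quotient_finite_of_isOpen _ (N i).toOpenSubgroup.isOpen
  -- the coordinate spaces
  set Dset : ∀ i : ι, Set (G ⧸ (N i).toSubgroup) :=
    fun i => QuotientGroup.mk '' ((Msub i : Subgroup G) : Set G) with hDset
  have hmemD : ∀ (i : ι) (g : G),
      (QuotientGroup.mk ((r i g)⁻¹ * g) : G ⧸ (N i).toSubgroup) ∈ Dset i := by
    intro i g
    exact ⟨(r i g)⁻¹ * g, symm_mem (rsel i g), rfl⟩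
  set ψ : G → ∀ i : ι, ↥(Dset i) :=
    fun g i => ⟨QuotientGroup.mk ((r i g)⁻¹ * g), hmemD i g⟩ with hψ
  -- continuity
  have hcont : Continuous ψ := by
    refine continuous_pi fun i => ?_
    refine Continuous.subtype_mk ?_ _
    exact continuous_quot_mk.comp (((rcont i).inv).mul continuous_id)
  -- injectivity
  have hinj : Function.Injective ψ := by
    intro g h hgh
    have key : ∀ i : ι, g⁻¹ * h ∈ (N i).toSubgroup := by
      intro i
      induction i using WellFoundedLT.induction with
      | ind i IH =>
        have hM : g⁻¹ * h ∈ Msub i := (hMmem i _).mpr IH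
        have hreq : r i g = r i h := rinv i g h hM
        have hq : (QuotientGroup.mk ((r i g)⁻¹ * g) : G ⧸ (N i).toSubgroup) =
            QuotientGroup.mk ((r i h)⁻¹ * h) := congrArg Subtype.val (congrFun hgh i)
        rw [← hreq] at hq
        have h2 := QuotientGroup.eq.mp hq
        have heq : ((r i g)⁻¹ * g)⁻¹ * ((r i g)⁻¹ * h) = g⁻¹ * h := by group
        rwa [heq] at h2
    have h1 : g⁻¹ * h = 1 := hNtriv _ key
    exact inv_mul_eq_one.mp h1
  -- density
  have hdense : ∀ (t : ∀ i : ι, ↥(Dset i)) (S : Finset ι), ∃ g : G, ∀ i ∈ S, ψ g i = t i := by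
    intro t S
    induction S using Finset.induction_on_max with
    | empty => exact ⟨1, by simp⟩
    | insert a S ha IH =>
      obtain ⟨g, hg⟩ := IH
      obtain ⟨u, huM, huq⟩ := (t a).2
      refine ⟨r a g * u, fun i hi => ?_⟩
      rcases Finset.mem_insert.mp hi with rfl | hiS
      · -- i = a
        have h2 : r i (r i g) = r i (r i g * u) :=
          rinv i (r i g) (r i g * u) (by
            have : (r i g)⁻¹ * (r i g * u) = u := by group
            rw [this]; exact huM)
        have h3 : r i g = r i (r i g) := rinv i g (r i g) (rsel i g)
        have h4 : r i (r i g * u) = r i g := (h3.trans h2).symm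
        refine Subtype.ext ?_
        show (QuotientGroup.mk ((r i (r i g * u))⁻¹ * (r i g * u)) : G ⧸ (N i).toSubgroup) =
          (t i : G ⧸ (N i).toSubgroup)
        rw [h4, ← huq]
        have : (r i g)⁻¹ * (r i g * u) = u := by group
        rw [this]
      · -- i ∈ S, i < a
        have hia : i < a := ha i hiS
        have hgg' : g⁻¹ * (r a g * u) ∈ Msub a := by
          have h5 : g⁻¹ * (r a g * u) = (g⁻¹ * r a g) * u := by group
          rw [h5]
          exact (Msub a).mul_mem (rsel a g) huM
        have hrr : r i (r a g * u) = r i g :=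
          (rinv i g (r a g * u) (hManti (le_of_lt hia) hgg')).symm
        rw [← hg i hiS]
        refine Subtype.ext ?_
        show (QuotientGroup.mk ((r i (r a g * u))⁻¹ * (r a g * u)) : G ⧸ (N i).toSubgroup) =
          QuotientGroup.mk ((r i g)⁻¹ * g)
        rw [hrr]
        refine (QuotientGroup.eq.mpr ?_).symm
        have heq : ((r i g)⁻¹ * g)⁻¹ * ((r i g)⁻¹ * (r a g * u)) = g⁻¹ * (r a g * u) := by group
        rw [heq]
        exact hMleN hia hgg'
  -- surjectivity
  have hsurj : Function.Surjective ψ := by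
    have hclosed_range : IsClosed (Set.range ψ) := (isCompact_range hcont).isClosed
    intro t
    have hmem : t ∈ closure (Set.range ψ) := by
      rw [mem_closure_iff]
      intro O hO htO
      obtain ⟨S, U, hU, hsub⟩ := isOpen_pi_iff.mp hO t htO
      obtain ⟨g, hg⟩ := hdense t S
      refine ⟨ψ g, hsub fun i hi => ?_, Set.mem_range_self g⟩
      rw [hg i hi]
      exact (hU i hi).2
    rw [hclosed_range.closure_eq] at hmem
    exact hmem
  -- the homeomorphism
  have φ : G ≃ₜ ∀ i : ι, ↥(Dset i) :=
    Continuous.homeoOfEquivCompactToT2 (f := Equiv.ofBijective ψ ⟨hinj, hsurj⟩) hcont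
  have hne_i : ∀ i : ι, Nonempty ↥(Dset i) :=
    fun i => ⟨⟨QuotientGroup.mk 1, ⟨1, one_mem _, rfl⟩⟩⟩
  refine ⟨{i : ι // Nontrivial ↥(Dset i)}, fun j => ↥(Dset j.1), fun j => inferInstance,
    fun j => inferInstance, fun j => Set.Finite.to_subtype (Set.toFinite _), fun j => j.2,
    ⟨φ.trans (pruneHomeo _ hne_i)⟩, ?_⟩
  refine le_trans (Cardinal.mk_subtype_le _) ?_
  rw [hmkι]
  exact le_of_eq hBc

end Grp
end PHC

/-- Every infinite profinite group $G$ is homeomorphic, as a topological space, to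
$(\mathbb Z/2\mathbb Z)^{w(G)}$, a product of $w(G)$ copies of the two point
discrete space. -/
theorem profinite_homeomorph_cantor_cube (G : Type u) [Group G] [TopologicalSpace G]
    [IsTopologicalGroup G] [CompactSpace G] [T2Space G] [TotallyDisconnectedSpace G]
    [Infinite G] :
    Nonempty (G ≃ₜ ((topWeight G).out → Bool)) := by
  classical
  obtain ⟨I, D, _tp, _disc, _fin, _ntriv, ⟨φ⟩, hle⟩ := PHC.step1 G
  have hIinf : Infinite I := by
    by_contra hfin
    rw [not_infinite_iff_finite] at hfin
    haveI : Finite (∀ i, D i) := by infer_instance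
    haveI : Finite G := Finite.of_equiv _ φ.symm.toEquiv
    exact not_finite G
  obtain ⟨ψ⟩ := PHC.step2 I D
  have hGI : G ≃ₜ (I → Bool) := φ.trans ψ
  have hge : topWeight G ≤ Cardinal.mk I :=
    le_trans (PHC.topWeight_le_of_homeomorph hGI) (PHC.topWeight_pi_bool_le I)
  have hmk : Cardinal.mk I = Cardinal.mk (topWeight G).out := by
    rw [Cardinal.mk_out]
    exact le_antisymm hle hge
  obtain ⟨e⟩ := Cardinal.eq.mp hmk
  exact ⟨hGI.trans (Homeomorph.piCongrLeft (Y := fun _ => Bool) e)⟩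
end

section
/- Let G be a compact Hausdorff topological group and S a suitable subset of G, i.e. S does not contain the identity, S is closed and discrete in G \ {1}, and the closure of the subgroup generated by S is G. Then |S| ≤ w(G). -/
universe u

/-- `S` is a suitable subset of the topological group `G`: it does not contain the
identity, `S ∪ {1}` is closed in `G`, `S` is discrete in the subspace topology
(equivalently, discrete in `G \ {1}`, since `1 ∉ S`), and the closed subgroup
generated by `S` is all of `G`. -/
def IsSuitable (G : Type u) [Group G] [TopologicalSpace G] [IsTopologicalGroup G]
    (S : Set G) : Prop :=
  (1 : G) ∉ S ∧ IsClosed (S ∪ {1}) ∧ DiscreteTopology S ∧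
    (Subgroup.closure S).topologicalClosure = ⊤

/-- For any suitable subset `S` of a compact Hausdorff group `G`, `|S| ≤ w(G)`. -/
theorem card_suitable_le_weight (G : Type u) [Group G] [TopologicalSpace G]
    [IsTopologicalGroup G] [CompactSpace G] [T2Space G]
    (S : Set G) (hS : IsSuitable G S) :
    Cardinal.mk S ≤ topWeight G := by
  obtain ⟨-, -, hdisc, -⟩ := hS
  apply le_csInf
  · exact ⟨_, _, TopologicalSpace.isTopologicalBasis_opens, rfl⟩
  rintro c ⟨B, hB, rfl⟩
  have key : ∀ s : S, ∃ b : B, (s : G) ∈ (b : Set G) ∧ (b : Set G) ∩ S = {(s : G)} := by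
    intro s
    have h1 : IsOpen ({s} : Set S) := isOpen_discrete _
    rw [isOpen_induced_iff] at h1
    obtain ⟨U, hU, hUS⟩ := h1
    have hsU : (s : G) ∈ U := by
      have : s ∈ (Subtype.val ⁻¹' U : Set S) := by rw [hUS]; rfl
      exact this
    obtain ⟨b, hbB, hsb, hbU⟩ := hB.exists_subset_of_mem_open hsU hU
    refine ⟨⟨b, hbB⟩, hsb, ?_⟩
    ext x
    constructor
    · rintro ⟨hxb, hxS⟩
      have : (⟨x, hxS⟩ : S) ∈ (Subtype.val ⁻¹' U : Set S) := hbU hxb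
      rw [hUS] at this
      simpa using congrArg Subtype.val this
    · rintro rfl
      exact ⟨hsb, s.2⟩
  choose f hf1 hf2 using key
  refine Cardinal.mk_le_of_injective (f := f) ?_
  intro s t hst
  have : (t : G) ∈ (f s : Set G) ∩ S := by rw [hst]; exact ⟨hf1 t, t.2⟩
  rw [hf2 s] at this
  exact Subtype.ext (by simpa using this.symm)
end
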